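/- arXiv:2603.26358 — 5 statements merged into one kernel-verified Lean document; each statement's English description precedes it below -/
import Mathlib

section
/- If P(E[Y|𝒢] ≠ E[Y|ℋ]) > 0 (Granger causality in mean) or P(E[(Y−E[Y|ℋ])²|𝒢] ≠ E[(Y−E[Y|ℋ])²|ℋ]) > 0 (Granger causality in variance), then P(E[(Y−E[Y|𝒢])²|𝒢] ≠ E[(Y−E[Y|ℋ])²|ℋ]) > 0 (simultaneous Granger causality in mean and variance). [Proposition 1] -/
open MeasureTheory

/-- The conditional expectation of an `L²` function is in `L²`. -/
lemma memℒp_two_condexp_aux {Ω : Type*} {mΩ : MeasurableSpace Ω} {P : Measure Ω}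
    [IsFiniteMeasure P] {m : MeasurableSpace Ω} (hm : m ≤ mΩ) {f : Ω → ℝ}
    (hf : MemLp f 2 P) : MemLp (P[f|m]) 2 P := by
  have hf1 : Integrable f P := hf.integrable one_le_two
  have hmem : MemLp (condExpL2 ℝ ℝ hm (hf.toLp f) : Ω → ℝ) 2 P := Lp.memLp _
  have heq : (condExpL2 ℝ ℝ hm (hf.toLp f) : Ω → ℝ) =ᵐ[P] P[f|m] := by
    refine ae_eq_condExp_of_forall_setIntegral_eq hm hf1
      (fun s hs hμs => integrableOn_condExpL2_of_measure_ne_top hm hμs.ne _)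
      (fun s hs hμs => ?_) (aestronglyMeasurable_condExpL2 hm _)
    rw [integral_condExpL2_eq hm (hf.toLp f) hs hμs.ne]
    exact integral_congr_ae (ae_restrict_of_ae hf.coeFn_toLp)
  exact hmem.ae_eq heq

/-- **Proposition 1.** If Granger causality in mean or Granger causality in variance holds,
then simultaneous Granger causality in mean and variance holds. -/
theorem simultaneous_granger_causality_of_mean_or_variance
    {Ω : Type*} {mΩ : MeasurableSpace Ω} (P : Measure Ω) [IsProbabilityMeasure P]
    {G H : MeasurableSpace Ω} (hGH : G ≤ H) (hHF : H ≤ mΩ)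
    (Y : Ω → ℝ) (hY : MemLp Y 2 P)
    (hcause :
      0 < P {ω | (P[Y|G]) ω ≠ (P[Y|H]) ω} ∨
      0 < P {ω | (P[(fun ω => (Y ω - (P[Y|H]) ω) ^ 2)|G]) ω
            ≠ (P[(fun ω => (Y ω - (P[Y|H]) ω) ^ 2)|H]) ω}) :
    0 < P {ω | (P[(fun ω => (Y ω - (P[Y|G]) ω) ^ 2)|G]) ω
          ≠ (P[(fun ω => (Y ω - (P[Y|H]) ω) ^ 2)|H]) ω} := by
  have hGF : G ≤ mΩ := hGH.trans hHF
  by_contra hpos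
  rw [not_lt, le_zero_iff] at hpos
  set mG := P[Y|G] with hmGdef
  set mH := P[Y|H] with hmHdef
  -- hypothesis: the conditional expectations of the squared residuals agree a.e.
  have hC : (P[(fun ω => (Y ω - mG ω) ^ 2)|G]) =ᵐ[P] (P[(fun ω => (Y ω - mH ω) ^ 2)|H]) := by
    rw [Filter.EventuallyEq, ae_iff]
    exact hpos
  -- L² and integrability facts
  have hY1 : Integrable Y P := hY.integrable one_le_two
  have hmG2 : MemLp mG 2 P := memℒp_two_condexp_aux hGF hY
  have hmH2 : MemLp mH 2 P := memℒp_two_condexp_aux hHF hY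
  have hYmG2 : MemLp (fun ω => Y ω - mG ω) 2 P := hY.sub hmG2
  have hYmH2 : MemLp (fun ω => Y ω - mH ω) 2 P := hY.sub hmH2
  have hd2 : MemLp (fun ω => mH ω - mG ω) 2 P := hmH2.sub hmG2
  have hisqG : Integrable (fun ω => (Y ω - mG ω) ^ 2) P := hYmG2.integrable_sq
  have hisqH : Integrable (fun ω => (Y ω - mH ω) ^ 2) P := hYmH2.integrable_sq
  have hisqd : Integrable (fun ω => (mH ω - mG ω) ^ 2) P := hd2.integrable_sq
  have hicross : Integrable (fun ω => (mH ω - mG ω) * (Y ω - mH ω)) P := by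
    have h : Integrable
        (fun ω => ((Y ω - mG ω) ^ 2 - (mH ω - mG ω) ^ 2 - (Y ω - mH ω) ^ 2) / 2) P :=
      ((hisqG.sub hisqd).sub hisqH).div_const 2
    refine h.congr (Filter.Eventually.of_forall fun ω => ?_)
    ring
  -- the residual Y - mH has zero conditional expectation given H
  have hres : (P[(fun ω => Y ω - mH ω)|H]) =ᵐ[P] 0 := by
    have h1 : (P[(fun ω => Y ω - mH ω)|H]) =ᵐ[P] P[Y|H] - P[mH|H] := by
      have := condExp_sub (m := H) (μ := P) hY1 integrable_condExp (f := Y) (g := mH)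
      simpa [Pi.sub_def] using this
    have h2 : P[mH|H] = mH :=
      condExp_of_stronglyMeasurable hHF stronglyMeasurable_condExp integrable_condExp
    filter_upwards [h1] with ω hω
    rw [hω, Pi.sub_apply, h2]
    simp [hmHdef]
  -- the cross term has zero conditional expectation given H
  have hcross0 : (P[(fun ω => (mH ω - mG ω) * (Y ω - mH ω))|H]) =ᵐ[P] 0 := by
    have hmeas : StronglyMeasurable[H] (fun ω => mH ω - mG ω) :=
      stronglyMeasurable_condExp.sub (stronglyMeasurable_condExp.mono hGH)
    have h1 := condExp_mul_of_stronglyMeasurable_left (μ := P) hmeas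
      (by simpa [Pi.mul_def] using hicross) (hYmH2.integrable one_le_two)
    have h1' : (P[(fun ω => (mH ω - mG ω) * (Y ω - mH ω))|H]) =ᵐ[P]
        fun ω => (mH ω - mG ω) * (P[(fun ω => Y ω - mH ω)|H]) ω := by
      simpa [Pi.mul_def] using h1
    filter_upwards [h1', hres] with ω h1ω h2ω
    simp [h1ω, h2ω]
  have hcross_int : ∫ ω, (mH ω - mG ω) * (Y ω - mH ω) ∂P = 0 := by
    rw [← integral_condExp hHF (f := fun ω => (mH ω - mG ω) * (Y ω - mH ω))]
    rw [integral_congr_ae hcross0]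
    simp
  -- the integrals of the two squared residuals agree
  have hint_eq : ∫ ω, (Y ω - mG ω) ^ 2 ∂P = ∫ ω, (Y ω - mH ω) ^ 2 ∂P := by
    calc ∫ ω, (Y ω - mG ω) ^ 2 ∂P
        = ∫ ω, (P[(fun ω => (Y ω - mG ω) ^ 2)|G]) ω ∂P := (integral_condExp hGF (f := fun ω => (Y ω - mG ω) ^ 2)).symm
      _ = ∫ ω, (P[(fun ω => (Y ω - mH ω) ^ 2)|H]) ω ∂P := integral_congr_ae hC
      _ = ∫ ω, (Y ω - mH ω) ^ 2 ∂P := integral_condExp hHF (f := fun ω => (Y ω - mH ω) ^ 2)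
  -- pointwise Pythagorean decomposition
  have hpt : ∀ ω, (Y ω - mG ω) ^ 2
      = (Y ω - mH ω) ^ 2 + (2 * ((mH ω - mG ω) * (Y ω - mH ω)) + (mH ω - mG ω) ^ 2) := by
    intro ω; ring
  have hint_expand : ∫ ω, (Y ω - mG ω) ^ 2 ∂P
      = ∫ ω, (Y ω - mH ω) ^ 2 ∂P
        + (2 * ∫ ω, (mH ω - mG ω) * (Y ω - mH ω) ∂P + ∫ ω, (mH ω - mG ω) ^ 2 ∂P) := by
    have hsum : Integrable
        (fun ω => 2 * ((mH ω - mG ω) * (Y ω - mH ω)) + (mH ω - mG ω) ^ 2) P :=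
      (hicross.const_mul 2).add hisqd
    have h1 : ∫ ω, (Y ω - mG ω) ^ 2 ∂P
        = ∫ ω, ((Y ω - mH ω) ^ 2
          + (2 * ((mH ω - mG ω) * (Y ω - mH ω)) + (mH ω - mG ω) ^ 2)) ∂P :=
      integral_congr_ae (Filter.Eventually.of_forall hpt)
    rw [h1, integral_add hisqH hsum, integral_add (hicross.const_mul 2) hisqd,
      integral_const_mul]
  -- hence the squared difference of conditional means integrates to zero
  have hdem : ∫ ω, (mH ω - mG ω) ^ 2 ∂P = 0 := by
    rw [hint_eq, hcross_int] at hint_expand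
    linarith
  have hd0 : (fun ω => (mH ω - mG ω) ^ 2) =ᵐ[P] 0 :=
    (integral_eq_zero_iff_of_nonneg (fun ω => sq_nonneg _) hisqd).mp hdem
  have hmGH : mG =ᵐ[P] mH := by
    filter_upwards [hd0] with ω hω
    have : (mH ω - mG ω) ^ 2 = 0 := hω
    have := pow_eq_zero_iff two_ne_zero |>.mp this
    linarith [sub_eq_zero.mp this]
  -- conclude: no Granger causality in mean nor in variance, contradiction
  rcases hcause with hmean | hvar
  · have : P {ω | mG ω ≠ mH ω} = 0 := ae_iff.mp hmGH
    rw [this] at hmean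
    exact lt_irrefl _ hmean
  · have hsq_eq : (fun ω => (Y ω - mG ω) ^ 2) =ᵐ[P] (fun ω => (Y ω - mH ω) ^ 2) := by
      filter_upwards [hmGH] with ω hω
      rw [hω]
    have hvG : (P[(fun ω => (Y ω - mH ω) ^ 2)|G]) =ᵐ[P] (P[(fun ω => (Y ω - mH ω) ^ 2)|H]) :=
      ((condExp_congr_ae (m := G) hsq_eq).symm).trans hC
    have : P {ω | (P[(fun ω => (Y ω - mH ω) ^ 2)|G]) ω
        ≠ (P[(fun ω => (Y ω - mH ω) ^ 2)|H]) ω} = 0 := ae_iff.mp hvG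
    rw [this] at hvar
    exact lt_irrefl _ hvar
end

section
/- If E[(Y − E[Y|𝒢])² | 𝒢] = E[(Y − E[Y|ℋ])² | ℋ] P-almost everywhere, then E[(Y − E[Y|ℋ])² | 𝒢] = E[(Y − E[Y|ℋ])² | ℋ] P-almost everywhere (absence of simultaneous Granger causality implies absence of Granger causality in variance; key step in the proof of Proposition 1). -/
open MeasureTheory

/-- Conditional expectation of an `L²` function is in `L²` (finite-measure version, proved via
uniqueness of conditional expectation and `condExpL2`). -/
lemma memℒp_two_condexp {Ω : Type*} {mΩ : MeasurableSpace Ω} {μ : Measure Ω}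
    [IsFiniteMeasure μ] {m : MeasurableSpace Ω} (hm : m ≤ mΩ)
    {f : Ω → ℝ} (hf : MemLp f 2 μ) : MemLp (μ[f|m]) 2 μ := by
  have h : (condExpL2 ℝ ℝ hm (hf.toLp f) : Ω → ℝ) =ᵐ[μ] μ[f|m] := by
    refine ae_eq_condExp_of_forall_setIntegral_eq hm (hf.integrable one_le_two)
      (fun s hs hμs => integrableOn_condExpL2_of_measure_ne_top hm hμs.ne _)
      (fun s hs hμs => ?_) (aestronglyMeasurable_condExpL2 hm _)
    rw [integral_condExpL2_eq hm (hf.toLp f) hs hμs.ne]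
    exact integral_congr_ae (ae_restrict_of_ae hf.coeFn_toLp)
  exact (Lp.memLp (condExpL2 ℝ ℝ hm (hf.toLp f) : Ω →₂[μ] ℝ)).ae_eq h

/-- Product of two `L²` functions is integrable (via the polarization identity). -/
lemma integrable_mul_of_memℒp_two {Ω : Type*} {mΩ : MeasurableSpace Ω} {μ : Measure Ω}
    {f g : Ω → ℝ} (hf : MemLp f 2 μ) (hg : MemLp g 2 μ) :
    Integrable (fun ω => f ω * g ω) μ := by
  have h : (fun ω => f ω * g ω) =
      fun ω => ((f ω + g ω) ^ 2 - f ω ^ 2 - g ω ^ 2) * (1 / 2) := by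
    funext ω; ring
  rw [h]
  exact (((hf.add hg).integrable_sq.sub hf.integrable_sq).sub hg.integrable_sq).mul_const _

/-- Absence of simultaneous Granger causality implies absence of Granger causality in variance:
if `E[(Y − E[Y|𝒢])² | 𝒢] = E[(Y − E[Y|ℋ])² | ℋ]` a.e., then
`E[(Y − E[Y|ℋ])² | 𝒢] = E[(Y − E[Y|ℋ])² | ℋ]` a.e. -/
theorem condVar_H_measurable_G_of_condVar_eq
    {Ω : Type*} {mΩ : MeasurableSpace Ω} (P : Measure Ω) [IsProbabilityMeasure P]
    {G H : MeasurableSpace Ω} (hGH : G ≤ H) (hHF : H ≤ mΩ)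
    (Y : Ω → ℝ) (hY : MemLp Y 2 P)
    (hvar : P[(fun ω => (Y ω - (P[Y|G]) ω) ^ 2)|G] =ᵐ[P]
      P[(fun ω => (Y ω - (P[Y|H]) ω) ^ 2)|H]) :
    P[(fun ω => (Y ω - (P[Y|H]) ω) ^ 2)|G] =ᵐ[P]
      P[(fun ω => (Y ω - (P[Y|H]) ω) ^ 2)|H] := by
  have hGF : G ≤ mΩ := hGH.trans hHF
  set f : Ω → ℝ := P[Y|H] with hf_def
  set g : Ω → ℝ := P[Y|G] with hg_def
  have hf2 : MemLp f 2 P := memℒp_two_condexp hHF hY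
  have hg2 : MemLp g 2 P := memℒp_two_condexp hGF hY
  have hA2 : MemLp (fun ω => Y ω - f ω) 2 P := hY.sub hf2
  have hB2 : MemLp (fun ω => f ω - g ω) 2 P := hf2.sub hg2
  have hA2i : Integrable (fun ω => (Y ω - f ω) ^ 2) P := hA2.integrable_sq
  have hB2i : Integrable (fun ω => (f ω - g ω) ^ 2) P := hB2.integrable_sq
  have hABi : Integrable (fun ω => (f ω - g ω) * (Y ω - f ω)) P :=
    integrable_mul_of_memℒp_two hB2 hA2
  -- cross term has zero conditional expectation w.r.t. H
  have hcross : P[(fun ω => (f ω - g ω) * (Y ω - f ω))|H] =ᵐ[P] 0 := by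
    have hBmeas : StronglyMeasurable[H] (fun ω => f ω - g ω) :=
      stronglyMeasurable_condExp.sub (stronglyMeasurable_condExp.mono hGH)
    have hAint : Integrable (fun ω => Y ω - f ω) P :=
      (hY.integrable one_le_two).sub integrable_condExp
    have h1 := condExp_mul_of_stronglyMeasurable_left (μ := P) (m := H) hBmeas hABi hAint
    have h2 : P[(fun ω => Y ω - f ω)|H] =ᵐ[P] 0 := by
      have hsub := condExp_sub (μ := P) (m := H) (hY.integrable one_le_two)
        (integrable_condExp (f := Y) (m := H))
      refine hsub.trans ?_
      have hff : P[f|H] =ᵐ[P] f :=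
        condExp_of_aestronglyMeasurable' hHF
          stronglyMeasurable_condExp.aestronglyMeasurable integrable_condExp
      filter_upwards [hff] with ω hω
      simp only [hf_def] at hω
      simp [hω]
    refine h1.trans ?_
    filter_upwards [h2] with ω hω
    simp only [Pi.zero_apply] at hω ⊢
    simp [hω]
  -- conditional expectation of decomposition of (Y-g)² w.r.t. G
  have h4 : P[(fun ω => 2 * ((f ω - g ω) * (Y ω - f ω)))|G] =ᵐ[P] 0 := by
    have h5 : P[(fun ω => (f ω - g ω) * (Y ω - f ω))|G] =ᵐ[P] 0 := by
      refine (condExp_condExp_of_le hGH hHF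
        (f := fun ω => (f ω - g ω) * (Y ω - f ω))).symm.trans ?_
      refine (condExp_congr_ae hcross).trans ?_
      rw [condExp_zero]
    have h6 := condExp_smul (μ := P) (m := G) (2 : ℝ)
      (fun ω => (f ω - g ω) * (Y ω - f ω))
    refine h6.trans ?_
    filter_upwards [h5] with ω hω
    simp only [Pi.smul_apply, Pi.zero_apply, smul_eq_mul] at hω ⊢
    rw [hω]; ring
  have hdecomp : (fun ω => (Y ω - g ω) ^ 2) = (fun ω => (Y ω - f ω) ^ 2) +
      ((fun ω => 2 * ((f ω - g ω) * (Y ω - f ω))) + fun ω => (f ω - g ω) ^ 2) := by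
    funext ω
    simp only [Pi.add_apply]
    ring
  have hsum : P[(fun ω => (Y ω - g ω) ^ 2)|G] =ᵐ[P]
      P[(fun ω => (Y ω - f ω) ^ 2)|G] + P[(fun ω => (f ω - g ω) ^ 2)|G] := by
    rw [hdecomp]
    refine (condExp_add hA2i ((hABi.const_mul 2).add hB2i) _).trans ?_
    have h3 := condExp_add (μ := P) (m := G) (hABi.const_mul 2) hB2i
    filter_upwards [h3, h4] with ω h3ω h4ω
    simp only [Pi.add_apply] at h3ω ⊢
    simp only [Pi.zero_apply] at h4ω
    rw [h3ω, h4ω]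
    ring
  -- P[(Y-f)²|G] coincides with P[(Y-g)²|G]
  have hAg : P[(fun ω => (Y ω - f ω) ^ 2)|G] =ᵐ[P] P[(fun ω => (Y ω - g ω) ^ 2)|G] := by
    refine (condExp_condExp_of_le hGH hHF (f := fun ω => (Y ω - f ω) ^ 2)).symm.trans ?_
    refine (condExp_congr_ae hvar.symm).trans ?_
    exact condExp_of_aestronglyMeasurable' hGF
      stronglyMeasurable_condExp.aestronglyMeasurable integrable_condExp
  -- hence P[(f-g)²|G] = 0 a.e.
  have hBzero : P[(fun ω => (f ω - g ω) ^ 2)|G] =ᵐ[P] 0 := by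
    filter_upwards [hsum, hAg] with ω h1 h2
    simp only [Pi.add_apply, Pi.zero_apply] at *
    linarith
  -- so ∫ (f-g)² = 0, hence f = g a.e.
  have hint : ∫ ω, (f ω - g ω) ^ 2 ∂P = 0 := by
    have h7 := integral_condExp (μ := P) (f := fun ω => (f ω - g ω) ^ 2) hGF
    rw [← h7, integral_congr_ae hBzero]
    simp
  have hfg : f =ᵐ[P] g := by
    have h0 : (fun ω => (f ω - g ω) ^ 2) =ᵐ[P] 0 :=
      (integral_eq_zero_iff_of_nonneg_ae
        (Filter.Eventually.of_forall fun ω => sq_nonneg _) hB2i).mp hint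
    filter_upwards [h0] with ω hω
    have h8 : (f ω - g ω) ^ 2 = 0 := hω
    nlinarith [sq_nonneg (f ω - g ω)]
  -- conclude
  calc P[(fun ω => (Y ω - f ω) ^ 2)|G]
      =ᵐ[P] P[(fun ω => (Y ω - g ω) ^ 2)|G] := hAg
    _ =ᵐ[P] P[(fun ω => (Y ω - f ω) ^ 2)|H] := hvar
end

section
/- For P-almost every ω, sup_{θ∈Θ} | n⁻¹ Σ_{t=0}^{n−1} Q(θ, T^t ω) − E[Q(θ,·)] | → 0 as n → ∞ (uniform strong law of large numbers for stationary ergodic sequences of continuous random functions, underlying the proof of Theorem 1). -/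
open MeasureTheory Filter Topology

section MaxErg
variable {Ω : Type*} {mΩ : MeasurableSpace Ω} {P : Measure Ω}
variable (T : Ω → Ω) (f : Ω → ℝ)

/-- max (0, S_1, ..., S_N) -/
noncomputable def maxS : ℕ → Ω → ℝ
  | 0 => fun _ => 0
  | (N+1) => fun ω => max (maxS N ω) (birkhoffSum T f (N+1) ω)

variable {T f}

theorem maxS_nonneg (N : ℕ) (ω : Ω) : 0 ≤ maxS T f N ω := by
  induction N with
  | zero => exact le_refl _
  | succ N ih => exact le_trans ih (le_max_left _ _)

theorem le_maxS (N : ℕ) (ω : Ω) {n : ℕ} (hn : n ≤ N) : birkhoffSum T f n ω ≤ maxS T f N ω := by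
  induction N with
  | zero => interval_cases n; simp [birkhoffSum_zero, maxS]
  | succ N ih =>
    rcases Nat.lt_or_ge n (N+1) with h | h
    · exact le_trans (ih (Nat.lt_succ_iff.1 h)) (le_max_left _ _)
    · have : n = N + 1 := le_antisymm hn h
      subst this; exact le_max_right _ _

theorem maxS_exists (N : ℕ) (ω : Ω) (h : 0 < maxS T f N ω) :
    ∃ n, 1 ≤ n ∧ n ≤ N ∧ maxS T f N ω = birkhoffSum T f n ω := by
  induction N with
  | zero => exact absurd h (by simp [maxS])
  | succ N ih =>
    rcases le_total (birkhoffSum T f (N+1) ω) (maxS T f N ω) with hle | hle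
    · have hmax : maxS T f (N+1) ω = maxS T f N ω := max_eq_left hle
      rw [hmax] at h ⊢
      obtain ⟨n, h1, h2, h3⟩ := ih h
      exact ⟨n, h1, h2.trans (Nat.le_succ _), h3⟩
    · have hmax : maxS T f (N+1) ω = birkhoffSum T f (N+1) ω := max_eq_right hle
      exact ⟨N+1, Nat.succ_le_succ (Nat.zero_le _), le_refl _, hmax⟩

theorem maxS_key (N : ℕ) (ω : Ω) (h : 0 < maxS T f N ω) :
    maxS T f N ω ≤ f ω + maxS T f N (T ω) := by
  obtain ⟨n, h1, h2, h3⟩ := maxS_exists N ω h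
  obtain ⟨m, rfl⟩ := Nat.exists_eq_add_of_le' h1
  rw [h3, birkhoffSum_succ']
  have := le_maxS (T := T) (f := f) N (T ω) (n := m) (by omega)
  linarith

theorem birkhoffSum_measurable (hT : Measurable T) (hf : Measurable f) (n : ℕ) :
    Measurable (birkhoffSum T f n) := by
  apply Finset.measurable_sum
  exact fun k _ => hf.comp (hT.iterate k)

theorem maxS_measurable (hT : Measurable T) (hf : Measurable f) (N : ℕ) :
    Measurable (maxS T f N) := by
  induction N with
  | zero => exact measurable_const
  | succ N ih => exact ih.max (birkhoffSum_measurable hT hf (N+1))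

theorem birkhoffSum_integrable (hT : MeasurePreserving T P P) (hfi : Integrable f P) (n : ℕ) :
    Integrable (birkhoffSum T f n) P := by
  apply integrable_finset_sum
  exact fun k _ => ((hT.iterate k).integrable_comp hfi.aestronglyMeasurable).2 hfi

theorem maxS_integrable (hT : MeasurePreserving T P P) (hfi : Integrable f P) (N : ℕ) :
    Integrable (maxS T f N) P := by
  induction N with
  | zero => exact integrable_zero _ _ _
  | succ N ih =>
    have h := ih.sup (birkhoffSum_integrable hT hfi (N+1))
    have heq : maxS T f (N+1) = maxS T f N ⊔ birkhoffSum T f (N+1) := by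
      funext ω; simp [maxS, Pi.sup_apply]
    rw [heq]; exact h

theorem integral_comp_mp (hT : MeasurePreserving T P P) {g : Ω → ℝ}
    (hg : AEStronglyMeasurable g P) : ∫ ω, g (T ω) ∂P = ∫ ω, g ω ∂P := by
  rw [← integral_map hT.measurable.aemeasurable (by rwa [hT.map_eq]), hT.map_eq]

theorem maximal_ergodic (hT : MeasurePreserving T P P) (hf : Measurable f)
    (hfi : Integrable f P) (N : ℕ) :
    0 ≤ ∫ ω in {ω | 0 < maxS T f N ω}, f ω ∂P := by
  set A : Set Ω := {ω | 0 < maxS T f N ω} with hAdef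
  have hMm : Measurable (maxS T f N) := maxS_measurable hT.measurable hf N
  have hA : MeasurableSet A := measurableSet_lt measurable_const hMm
  have hMi : Integrable (maxS T f N) P := maxS_integrable hT hfi N
  have hMTi : Integrable (fun ω => maxS T f N (T ω)) P :=
    (hT.integrable_comp hMi.aestronglyMeasurable).2 hMi
  have step1 : ∫ ω in A, (maxS T f N ω - maxS T f N (T ω)) ∂P ≤ ∫ ω in A, f ω ∂P := by
    refine setIntegral_mono_on ((hMi.sub hMTi).integrableOn) hfi.integrableOn hA ?_
    intro ω hω
    have := maxS_key N ω hω
    linarith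
  have step2 : ∫ ω in A, (maxS T f N ω - maxS T f N (T ω)) ∂P
      = ∫ ω in A, maxS T f N ω ∂P - ∫ ω in A, maxS T f N (T ω) ∂P :=
    integral_sub hMi.integrableOn hMTi.integrableOn
  have step3 : ∫ ω in A, maxS T f N ω ∂P = ∫ ω, maxS T f N ω ∂P := by
    rw [← integral_add_compl hA hMi]
    have : ∫ ω in Aᶜ, maxS T f N ω ∂P = 0 := by
      refine setIntegral_eq_zero_of_forall_eq_zero ?_
      intro ω hω
      have h1 : ¬ (0 < maxS T f N ω) := hω
      have h2 := maxS_nonneg (T := T) (f := f) N ω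
      linarith
    rw [this, add_zero]
  have step4 : ∫ ω in A, maxS T f N (T ω) ∂P ≤ ∫ ω, maxS T f N (T ω) ∂P :=
    setIntegral_le_integral hMTi (Eventually.of_forall fun ω => maxS_nonneg N (T ω))
  have step5 : ∫ ω, maxS T f N (T ω) ∂P = ∫ ω, maxS T f N ω ∂P :=
    integral_comp_mp hT hMi.aestronglyMeasurable
  calc (0:ℝ) = ∫ ω, maxS T f N ω ∂P - ∫ ω, maxS T f N ω ∂P := by ring
  _ ≤ ∫ ω in A, maxS T f N ω ∂P - ∫ ω in A, maxS T f N (T ω) ∂P := by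
      rw [step3]
      have := step4.trans (le_of_eq step5)
      linarith
  _ = ∫ ω in A, (maxS T f N ω - maxS T f N (T ω)) ∂P := step2.symm
  _ ≤ ∫ ω in A, f ω ∂P := step1

end MaxErg

section ERealAux
open Filter

theorem EReal_le_of_forall {x y : EReal} (h : ∀ q : ℝ, y < (q : EReal) → x ≤ (q : EReal)) :
    x ≤ y := by
  by_contra hxy
  push_neg at hxy
  obtain ⟨q, hq1, hq2⟩ := EReal.exists_between_coe_real hxy
  exact absurd (h q hq1) (not_le.2 hq2)

theorem limsup_aux_le (a b : ℕ → ℝ) (c : ℝ)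
    (h : ∀ n : ℕ, (n : ℝ) * a n ≤ ((n : ℝ) + 1) * b (n + 1) + c) :
    limsup (fun n => (a n : EReal)) atTop ≤ limsup (fun n => (b n : EReal)) atTop := by
  refine EReal_le_of_forall fun q hq => ?_
  obtain ⟨q', hq1, hq2⟩ := EReal.exists_between_coe_real hq
  rw [EReal.coe_lt_coe_iff] at hq2
  have hev : ∀ᶠ n in atTop, (b n : EReal) < (q' : EReal) := eventually_lt_of_limsup_lt hq1
  have hev' : ∀ᶠ n in atTop, b (n + 1) ≤ q' := by
    obtain ⟨N, hN⟩ := eventually_atTop.1 hev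
    exact eventually_atTop.2 ⟨N, fun n hn => le_of_lt (EReal.coe_lt_coe_iff.1 (hN (n+1) (by omega)))⟩
  have ht : Tendsto (fun n : ℕ => q' + (q' + c) * (1 / (n : ℝ))) atTop (𝓝 q') := by
    have := tendsto_one_div_atTop_nhds_zero_nat (𝕜 := ℝ)
    have h2 := (tendsto_const_nhds (x := q') (f := atTop (α := ℕ))).add
      ((tendsto_const_nhds (x := q' + c) (f := atTop (α := ℕ))).mul this)
    simpa using h2
  have hev2 : ∀ᶠ n : ℕ in atTop, q' + (q' + c) * (1 / (n : ℝ)) < q :=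
    ht.eventually_lt_const hq2
  have hfin : ∀ᶠ n : ℕ in atTop, (a n : EReal) ≤ (q : EReal) := by
    filter_upwards [hev', hev2, eventually_ge_atTop 1] with n h1 h2 h3
    rw [EReal.coe_le_coe_iff]
    have hn : (0:ℝ) < n := by exact_mod_cast h3
    have key : (n : ℝ) * a n ≤ ((n:ℝ) + 1) * q' + c :=
      (h n).trans (by nlinarith [h1])
    have : a n ≤ (((n:ℝ) + 1) * q' + c) / n := by
      rw [le_div_iff₀ hn]; linarith [key]
    refine le_of_lt (lt_of_le_of_lt this ?_)
    have : (((n:ℝ) + 1) * q' + c) / n = q' + (q' + c) * (1 / n) := by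
      field_simp; ring
    rw [this]; exact h2
  exact limsup_le_of_le (by isBoundedDefault) hfin

theorem limsup_aux_le' (a b : ℕ → ℝ) (c : ℝ)
    (h : ∀ n : ℕ, ((n : ℝ) + 1) * b (n + 1) ≤ (n : ℝ) * a n + c) :
    limsup (fun n => (b n : EReal)) atTop ≤ limsup (fun n => (a n : EReal)) atTop := by
  refine EReal_le_of_forall fun q hq => ?_
  obtain ⟨q', hq1, hq2⟩ := EReal.exists_between_coe_real hq
  rw [EReal.coe_lt_coe_iff] at hq2
  have hev : ∀ᶠ n in atTop, (a n : EReal) < (q' : EReal) := eventually_lt_of_limsup_lt hq1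
  have hev' : ∀ᶠ n in atTop, a n ≤ q' := by
    filter_upwards [hev] with n hn using le_of_lt (EReal.coe_lt_coe_iff.1 hn)
  have ht : Tendsto (fun n : ℕ => q' + (c - q') * (1 / ((n : ℝ) + 1))) atTop (𝓝 q') := by
    have := tendsto_one_div_add_atTop_nhds_zero_nat (𝕜 := ℝ)
    have h2 := (tendsto_const_nhds (x := q') (f := atTop (α := ℕ))).add
      ((tendsto_const_nhds (x := c - q') (f := atTop (α := ℕ))).mul this)
    simpa using h2
  have hev2 : ∀ᶠ n : ℕ in atTop, q' + (c - q') * (1 / ((n : ℝ) + 1)) < q :=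
    ht.eventually_lt_const hq2
  have hfin' : ∀ᶠ n : ℕ in atTop, b (n + 1) ≤ q := by
    filter_upwards [hev', hev2] with n h1 h2
    have hn : (0:ℝ) < (n:ℝ) + 1 := by positivity
    have key : ((n:ℝ) + 1) * b (n + 1) ≤ (n : ℝ) * q' + c :=
      (h n).trans (by nlinarith [h1])
    have hb : b (n + 1) ≤ ((n : ℝ) * q' + c) / ((n:ℝ) + 1) := by
      rw [le_div_iff₀ hn]; linarith [key]
    refine le_of_lt (lt_of_le_of_lt hb ?_)
    have : ((n : ℝ) * q' + c) / ((n:ℝ) + 1) = q' + (c - q') * (1 / ((n:ℝ) + 1)) := by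
      field_simp; ring
    rw [this]; exact h2
  have hfin : ∀ᶠ n : ℕ in atTop, (b n : EReal) ≤ (q : EReal) := by
    obtain ⟨N, hN⟩ := eventually_atTop.1 hfin'
    refine eventually_atTop.2 ⟨N + 1, fun n hn => ?_⟩
    obtain ⟨m, rfl⟩ : ∃ m, n = m + 1 := ⟨n - 1, by omega⟩
    exact EReal.coe_le_coe_iff.2 (hN m (by omega))
  exact limsup_le_of_le (by isBoundedDefault) hfin

end ERealAux

section Birkhoff
variable {Ω : Type*} {mΩ : MeasurableSpace Ω} {P : Measure Ω} [IsProbabilityMeasure P]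
variable {T : Ω → Ω} {f : Ω → ℝ}

theorem birkhoffSum_neg' (T : Ω → Ω) (f : Ω → ℝ) (n : ℕ) (ω : Ω) :
    birkhoffSum T (fun x => -f x) n ω = - birkhoffSum T f n ω := by
  simp [birkhoffSum, Finset.sum_neg_distrib]

theorem maxS_mono (T : Ω → Ω) (f : Ω → ℝ) (ω : Ω) : Monotone (fun N => maxS T f N ω) := by
  intro a b hab
  rcases le_or_gt (maxS T f a ω) 0 with h | h
  · exact h.trans (maxS_nonneg b ω)
  · obtain ⟨n, h1, h2, h3⟩ := maxS_exists a ω h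
    show maxS T f a ω ≤ maxS T f b ω
    rw [h3]
    exact le_maxS b ω (h2.trans hab)

/-- The limsup of Birkhoff averages is invariant under `T`. -/
theorem limsup_avg_invariant (T : Ω → Ω) (f : Ω → ℝ) (ω : Ω) :
    limsup (fun n => ((birkhoffSum T f n (T ω) / n : ℝ) : EReal)) atTop
      = limsup (fun n => ((birkhoffSum T f n ω / n : ℝ) : EReal)) atTop := by
  set a : ℕ → ℝ := fun n => birkhoffSum T f n (T ω) / n with ha
  set b : ℕ → ℝ := fun n => birkhoffSum T f n ω / n with hb
  have hid : ∀ n : ℕ, (n : ℝ) * a n = ((n : ℝ) + 1) * b (n + 1) - f ω := by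
    intro n
    have hS : birkhoffSum T f (n + 1) ω = f ω + birkhoffSum T f n (T ω) :=
      birkhoffSum_succ' T f n ω
    simp only [ha, hb]
    push_cast
    rcases Nat.eq_zero_or_pos n with h | h
    · subst h
      norm_num [birkhoffSum_zero, birkhoffSum_one]
    · have hn : ((n : ℝ)) ≠ 0 := by
        have : (0:ℝ) < n := by exact_mod_cast h
        positivity
      rw [hS]
      field_simp
      ring
  apply le_antisymm
  · exact limsup_aux_le a b (-(f ω)) (fun n => by rw [hid n]; ring_nf; exact le_refl _)
  · exact limsup_aux_le' a b (f ω) (fun n => by rw [hid n]; ring_nf; exact le_refl _)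

theorem limsup_avg_measurable (hT : Measurable T) (hf : Measurable f) :
    Measurable (fun ω => limsup (fun n => ((birkhoffSum T f n ω / n : ℝ) : EReal)) atTop) := by
  have : (fun ω => limsup (fun n => ((birkhoffSum T f n ω / n : ℝ) : EReal)) atTop)
      = fun ω => ⨅ n : ℕ, ⨆ i : ℕ, ⨆ _ : i ≥ n, ((birkhoffSum T f i ω / i : ℝ) : EReal) := by
    funext ω; exact limsup_eq_iInf_iSup_of_nat
  rw [this]
  refine Measurable.iInf fun n => Measurable.iSup fun i => Measurable.iSup_Prop _ ?_
  exact measurable_coe_real_ereal.comp ((birkhoffSum_measurable hT hf i).div_const _)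

theorem birkhoff_limsup_le (hT : Ergodic T P) (hf : Measurable f) (hfi : Integrable f P)
    {r : ℝ} (hr : ∫ ω, f ω ∂P < r) :
    ∀ᵐ ω ∂P, limsup (fun n => ((birkhoffSum T f n ω / n : ℝ) : EReal)) atTop ≤ (r : EReal) := by
  set L : Ω → EReal := fun ω => limsup (fun n => ((birkhoffSum T f n ω / n : ℝ) : EReal)) atTop
    with hL
  have hLm : Measurable L := limsup_avg_measurable hT.toMeasurePreserving.measurable hf
  set A : Set Ω := {ω | (r : EReal) < L ω} with hA
  have hAm : MeasurableSet A := measurableSet_lt measurable_const hLm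
  have hinv : T ⁻¹' A = A := by
    ext ω
    simp only [Set.mem_preimage, hA, Set.mem_setOf_eq, hL]
    rw [limsup_avg_invariant T f ω]
  rcases hT.toPreErgodic.measure_self_or_compl_eq_zero hAm hinv with h0 | h1
  · rw [ae_iff]
    convert h0 using 2
    ext ω
    simp [hA, hL, not_le]
  · exfalso
    set g : Ω → ℝ := fun ω => f ω - r with hg
    have hgm : Measurable g := hf.sub measurable_const
    have hgi : Integrable g P := hfi.sub (integrable_const r)
    set B : Set Ω := ⋃ N, {ω | 0 < maxS T g N ω} with hB
    have hBm : MeasurableSet B := MeasurableSet.iUnion fun N =>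
      measurableSet_lt measurable_const (maxS_measurable hT.toMeasurePreserving.measurable hgm N)
    have hgsum : ∀ n ω, birkhoffSum T g n ω = birkhoffSum T f n ω - n * r := by
      intro n ω
      simp [hg, birkhoffSum, Finset.sum_sub_distrib]
    have hAB : A ⊆ B := by
      intro ω hω
      have hfreq : ∃ᶠ n in atTop, (r : EReal) < ((birkhoffSum T f n ω / n : ℝ) : EReal) :=
        frequently_lt_of_lt_limsup (by isBoundedDefault) hω
      obtain ⟨n, hn1, hn2⟩ := frequently_atTop.1 hfreq 1
      rw [EReal.coe_lt_coe_iff] at hn2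
      have hnpos : (0:ℝ) < n := by exact_mod_cast hn1
      have hSn : (n : ℝ) * r < birkhoffSum T f n ω := by
        rw [lt_div_iff₀ hnpos] at hn2
        linarith [hn2]
      have hpos : 0 < birkhoffSum T g n ω := by
        rw [hgsum]; linarith
      exact Set.mem_iUnion.2 ⟨n, lt_of_lt_of_le hpos (le_maxS n ω le_rfl)⟩
    have hPBc : P Bᶜ = 0 := measure_mono_null (Set.compl_subset_compl.2 hAB) h1
    have hmono : Monotone (fun N => {ω | 0 < maxS T g N ω}) := by
      intro u v huv ω hω
      exact lt_of_lt_of_le hω (maxS_mono T g ω huv)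
    have htend : Tendsto (fun N => ∫ ω in {ω | 0 < maxS T g N ω}, g ω ∂P) atTop
        (𝓝 (∫ ω in B, g ω ∂P)) := by
      exact tendsto_setIntegral_of_monotone
        (fun N => measurableSet_lt measurable_const
          (maxS_measurable hT.toMeasurePreserving.measurable hgm N))
        hmono hgi.integrableOn
    have hint : 0 ≤ ∫ ω in B, g ω ∂P :=
      ge_of_tendsto' htend (fun N => maximal_ergodic hT.toMeasurePreserving hgm hgi N)
    have hBfull : ∫ ω in B, g ω ∂P = ∫ ω, g ω ∂P := by
      rw [← integral_add_compl hBm hgi]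
      have : ∫ ω in Bᶜ, g ω ∂P = 0 := by
        rw [Measure.restrict_eq_zero.2 hPBc]
        simp
      rw [this, add_zero]
    have hgval : ∫ ω, g ω ∂P = (∫ ω, f ω ∂P) - r := by
      rw [hg]
      rw [integral_sub hfi (integrable_const r), integral_const]
      simp
    rw [hBfull, hgval] at hint
    linarith

theorem birkhoff_limsup_le_integral (hT : Ergodic T P) (hf : Measurable f)
    (hfi : Integrable f P) :
    ∀ᵐ ω ∂P, limsup (fun n => ((birkhoffSum T f n ω / n : ℝ) : EReal)) atTop
      ≤ ((∫ ω, f ω ∂P : ℝ) : EReal) := by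
  have h : ∀ᵐ ω ∂P, ∀ k : ℕ, limsup (fun n => ((birkhoffSum T f n ω / n : ℝ) : EReal)) atTop
      ≤ (((∫ ω, f ω ∂P) + 1 / ((k:ℝ) + 1) : ℝ) : EReal) := by
    rw [ae_all_iff]
    intro k
    exact birkhoff_limsup_le hT hf hfi (lt_add_of_pos_right _ (by positivity))
  filter_upwards [h] with ω hω
  refine EReal_le_of_forall fun q hq => ?_
  rw [EReal.coe_lt_coe_iff] at hq
  obtain ⟨k, hk⟩ := exists_nat_gt (1 / (q - (∫ ω, f ω ∂P)))
  have hqpos : 0 < q - ∫ ω, f ω ∂P := by linarith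
  have h1 : 1 / ((k : ℝ) + 1) < q - ∫ ω, f ω ∂P := by
    rw [div_lt_iff₀ (by positivity)]
    have h2 : 1 / (q - ∫ ω, f ω ∂P) < (k : ℝ) + 1 := by linarith
    rw [div_lt_iff₀ hqpos] at h2
    linarith [h2]
  refine (hω k).trans ?_
  exact EReal.coe_le_coe_iff.2 (by linarith)

/-- Birkhoff's pointwise ergodic theorem for an ergodic transformation. -/
theorem birkhoff_ae (hT : Ergodic T P) (hf : Measurable f) (hfi : Integrable f P) :
    ∀ᵐ ω ∂P, Tendsto (fun n : ℕ => (n : ℝ)⁻¹ * birkhoffSum T f n ω) atTop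
      (𝓝 (∫ x, f x ∂P)) := by
  have hnegm : Measurable (fun ω => -f ω) := hf.neg
  have hnegi : Integrable (fun ω => -f ω) P := hfi.neg
  filter_upwards [birkhoff_limsup_le_integral hT hf hfi,
    birkhoff_limsup_le_integral hT hnegm hnegi] with ω h1 h2
  set b : ℕ → ℝ := fun n => birkhoffSum T f n ω / n with hb
  have hneg_eq : (fun n => ((birkhoffSum T (fun x => -f x) n ω / n : ℝ) : EReal))
      = fun n => -((b n : ℝ) : EReal) := by
    funext n
    rw [birkhoffSum_neg', neg_div, EReal.coe_neg]
  rw [hneg_eq] at h2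
  have hintneg : ∫ ω, (fun x => -f x) ω ∂P = - ∫ x, f x ∂P := by
    simp [integral_neg]
  rw [hintneg] at h2
  have h2' : limsup (- fun n => ((b n : ℝ) : EReal)) atTop ≤ ((- ∫ x, f x ∂P : ℝ) : EReal) := h2
  rw [EReal.limsup_neg] at h2'
  have hliminf : ((∫ x, f x ∂P : ℝ) : EReal) ≤ liminf (fun n => ((b n : ℝ) : EReal)) atTop := by
    have h4 : -liminf (fun n => ((b n : ℝ) : EReal)) atTop
        ≤ -((∫ x, f x ∂P : ℝ) : EReal) := by
      rw [show -((∫ x, f x ∂P : ℝ) : EReal) = ((- ∫ x, f x ∂P : ℝ) : EReal) from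
        (EReal.coe_neg _).symm]
      exact h2'
    have h5 := EReal.neg_le.mp h4
    rwa [neg_neg] at h5
  have hle : liminf (fun n => ((b n : ℝ) : EReal)) atTop
      ≤ limsup (fun n => ((b n : ℝ) : EReal)) atTop := liminf_le_limsup
  have heq1 : limsup (fun n => ((b n : ℝ) : EReal)) atTop = ((∫ x, f x ∂P : ℝ) : EReal) :=
    le_antisymm h1 (hliminf.trans hle)
  have heq2 : liminf (fun n => ((b n : ℝ) : EReal)) atTop = ((∫ x, f x ∂P : ℝ) : EReal) :=
    le_antisymm (hle.trans h1) hliminf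
  have htend : Tendsto (fun n => ((b n : ℝ) : EReal)) atTop (𝓝 ((∫ x, f x ∂P : ℝ) : EReal)) :=
    tendsto_of_liminf_eq_limsup heq2 heq1
  have := EReal.tendsto_coe.1 htend
  refine this.congr fun n => ?_
  rw [hb]
  simp [div_eq_inv_mul]

end Birkhoff

/-- Uniform strong law of large numbers for stationary ergodic sequences of continuous
random functions (underlying the proof of Theorem 1): for P-almost every `ω`,
`sup_{θ∈Θ} | n⁻¹ Σ_{t=0}^{n−1} Q(θ, T^t ω) − E[Q(θ,·)] | → 0` as `n → ∞`. -/
theorem uniform_slln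
    {Ω : Type*} {mΩ : MeasurableSpace Ω} (P : Measure Ω) [IsProbabilityMeasure P]
    (T : Ω → Ω) (hT : Ergodic T P)
    {d : ℕ} (Θ : Set (Fin d → ℝ)) (hΘcompact : IsCompact Θ)
    (Q : (Fin d → ℝ) → Ω → ℝ)
    (hQmeas : ∀ θ, Measurable (Q θ))
    (hQcont : ∀ ω, ContinuousOn (fun θ => Q θ ω) Θ)
    (hC1 : Integrable (fun ω => ⨆ θ : Θ, |Q (θ : Fin d → ℝ) ω|) P) :
    ∀ᵐ ω ∂P, Tendsto
      (fun n : ℕ => ⨆ θ : Θ,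
        |(n : ℝ)⁻¹ * ∑ t ∈ Finset.range n, Q (θ : Fin d → ℝ) (T^[t] ω)
          - ∫ x, Q (θ : Fin d → ℝ) x ∂P|)
      atTop (nhds 0) := by
  classical
  rcases isEmpty_or_nonempty ↥Θ with hE | hNE
  · refine Eventually.of_forall fun ω => ?_
    simpa [Real.iSup_of_isEmpty] using
      (tendsto_const_nhds : Tendsto (fun _ : ℕ => (0:ℝ)) atTop (𝓝 0))
  obtain ⟨u, hu⟩ := TopologicalSpace.exists_dense_seq ↥Θ
  set F : Ω → ℝ := fun ω => ⨆ θ : Θ, |Q (θ : Fin d → ℝ) ω| with hFdef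
  have hFb : ∀ ω, ∀ θ, θ ∈ Θ → |Q θ ω| ≤ F ω := by
    intro ω θ hθ
    have hb : BddAbove (Set.range fun θ : Θ => |Q (θ : Fin d → ℝ) ω|) := by
      have him : BddAbove ((fun θ => |Q θ ω|) '' Θ) :=
        (hΘcompact.image_of_continuousOn ((hQcont ω).abs)).bddAbove
      rwa [Set.image_eq_range] at him
    exact le_ciSup hb ⟨θ, hθ⟩
  have hFi : Integrable F P := hC1
  set gU : (Fin d → ℝ) → ℝ → Ω → ℝ := fun θ₀ δ ω =>
    ⨆ j : {j : ℕ // dist ((u j : ↥Θ) : Fin d → ℝ) θ₀ < δ}, Q ((u j : ↥Θ) : Fin d → ℝ) ω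
    with hgUdef
  set gL : (Fin d → ℝ) → ℝ → Ω → ℝ := fun θ₀ δ ω =>
    ⨅ j : {j : ℕ // dist ((u j : ↥Θ) : Fin d → ℝ) θ₀ < δ}, Q ((u j : ↥Θ) : Fin d → ℝ) ω
    with hgLdef
  have hJne : ∀ θ₀ ∈ Θ, ∀ δ : ℝ, 0 < δ →
      Nonempty {j : ℕ // dist ((u j : ↥Θ) : Fin d → ℝ) θ₀ < δ} := by
    intro θ₀ hθ₀ δ hδ
    obtain ⟨j, hj⟩ := Metric.denseRange_iff.1 hu ⟨θ₀, hθ₀⟩ δ hδ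
    refine ⟨⟨j, ?_⟩⟩
    have h2 : dist θ₀ ((u j : ↥Θ) : Fin d → ℝ) < δ := hj
    rw [dist_comm] at h2
    exact h2
  have hgUm : ∀ θ₀ δ, Measurable (gU θ₀ δ) := by
    intro θ₀ δ
    exact Measurable.iSup fun j => hQmeas _
  have hgLm : ∀ θ₀ δ, Measurable (gL θ₀ δ) := by
    intro θ₀ δ
    exact Measurable.iInf fun j => hQmeas _
  have hbddU : ∀ (θ₀ : Fin d → ℝ) (δ : ℝ) ω,
      BddAbove (Set.range fun j : {j : ℕ // dist ((u j : ↥Θ) : Fin d → ℝ) θ₀ < δ} =>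
        Q ((u j : ↥Θ) : Fin d → ℝ) ω) := by
    intro θ₀ δ ω
    refine ⟨F ω, ?_⟩
    rintro x ⟨j, rfl⟩
    exact (le_abs_self _).trans (hFb ω _ (u (j:ℕ)).2)
  have hbddL : ∀ (θ₀ : Fin d → ℝ) (δ : ℝ) ω,
      BddBelow (Set.range fun j : {j : ℕ // dist ((u j : ↥Θ) : Fin d → ℝ) θ₀ < δ} =>
        Q ((u j : ↥Θ) : Fin d → ℝ) ω) := by
    intro θ₀ δ ω
    refine ⟨-F ω, ?_⟩
    rintro x ⟨j, rfl⟩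
    have h1 := hFb ω _ (u (j:ℕ)).2
    have h2 := neg_abs_le (Q ((u (j:ℕ) : ↥Θ) : Fin d → ℝ) ω)
    linarith
  have hgUb : ∀ θ₀, θ₀ ∈ Θ → ∀ δ : ℝ, 0 < δ → ∀ ω, |gU θ₀ δ ω| ≤ F ω := by
    intro θ₀ hθ₀ δ hδ ω
    haveI := hJne θ₀ hθ₀ δ hδ
    rw [abs_le]
    constructor
    · obtain ⟨j0⟩ := hJne θ₀ hθ₀ δ hδ
      have h1 := hFb ω _ (u (j0:ℕ)).2
      have h2 := neg_abs_le (Q ((u (j0:ℕ) : ↥Θ) : Fin d → ℝ) ω)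
      have h3 : Q ((u (j0:ℕ) : ↥Θ) : Fin d → ℝ) ω ≤ gU θ₀ δ ω := le_ciSup (hbddU θ₀ δ ω) j0
      linarith
    · exact ciSup_le fun j => (le_abs_self _).trans (hFb ω _ (u (j:ℕ)).2)
  have hgLb : ∀ θ₀, θ₀ ∈ Θ → ∀ δ : ℝ, 0 < δ → ∀ ω, |gL θ₀ δ ω| ≤ F ω := by
    intro θ₀ hθ₀ δ hδ ω
    haveI := hJne θ₀ hθ₀ δ hδ
    rw [abs_le]
    constructor
    · refine le_ciInf fun j => ?_
      have h1 := hFb ω _ (u (j:ℕ)).2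
      have h2 := neg_abs_le (Q ((u (j:ℕ) : ↥Θ) : Fin d → ℝ) ω)
      linarith
    · obtain ⟨j0⟩ := hJne θ₀ hθ₀ δ hδ
      have h3 : gL θ₀ δ ω ≤ Q ((u (j0:ℕ) : ↥Θ) : Fin d → ℝ) ω := ciInf_le (hbddL θ₀ δ ω) j0
      exact h3.trans ((le_abs_self _).trans (hFb ω _ (u (j0:ℕ)).2))
  have hgUi : ∀ θ₀, θ₀ ∈ Θ → ∀ δ : ℝ, 0 < δ → Integrable (gU θ₀ δ) P := by
    intro θ₀ hθ₀ δ hδ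
    refine hC1.mono' ((hgUm θ₀ δ).aestronglyMeasurable) ?_
    exact Eventually.of_forall fun ω => by
      rw [Real.norm_eq_abs]; exact hgUb θ₀ hθ₀ δ hδ ω
  have hgLi : ∀ θ₀, θ₀ ∈ Θ → ∀ δ : ℝ, 0 < δ → Integrable (gL θ₀ δ) P := by
    intro θ₀ hθ₀ δ hδ
    refine hC1.mono' ((hgLm θ₀ δ).aestronglyMeasurable) ?_
    exact Eventually.of_forall fun ω => by
      rw [Real.norm_eq_abs]; exact hgLb θ₀ hθ₀ δ hδ ω
  have hQi : ∀ θ, θ ∈ Θ → Integrable (Q θ) P := by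
    intro θ hθ
    refine hC1.mono' (hQmeas θ).aestronglyMeasurable ?_
    exact Eventually.of_forall fun ω => by rw [Real.norm_eq_abs]; exact hFb ω θ hθ
  have hnear : ∀ (θ : Fin d → ℝ), θ ∈ Θ → ∀ ω, ∀ ε : ℝ, 0 < ε → ∀ η : ℝ, 0 < η →
      ∃ j : ℕ, dist ((u j : ↥Θ) : Fin d → ℝ) θ < η ∧ |Q ((u j : ↥Θ) : Fin d → ℝ) ω - Q θ ω| < ε := by
    intro θ hθ ω ε hε η hη
    have hc := hQcont ω θ hθ
    rw [Metric.continuousWithinAt_iff] at hc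
    obtain ⟨ρ, hρ, hball⟩ := hc ε hε
    have hmin : 0 < min ρ η := lt_min hρ hη
    obtain ⟨j, hj⟩ := Metric.denseRange_iff.1 hu ⟨θ, hθ⟩ _ hmin
    have hj' : dist ((u j : ↥Θ) : Fin d → ℝ) θ < min ρ η := by
      have h2 : dist θ ((u j : ↥Θ) : Fin d → ℝ) < min ρ η := hj
      rw [dist_comm] at h2
      exact h2
    have hQj := hball (u j).2 (hj'.trans_le (min_le_left _ _))
    rw [Real.dist_eq] at hQj
    exact ⟨j, hj'.trans_le (min_le_right _ _), hQj⟩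
  have hQleU : ∀ θ₀ (δ : ℝ) ω θ, θ ∈ Θ → dist θ θ₀ < δ → Q θ ω ≤ gU θ₀ δ ω := by
    intro θ₀ δ ω θ hθ hdist
    refine le_of_forall_pos_le_add fun ε hε => ?_
    obtain ⟨j, hj1, hj2⟩ := hnear θ hθ ω ε hε (δ - dist θ θ₀) (by linarith)
    have hjJ : dist ((u j : ↥Θ) : Fin d → ℝ) θ₀ < δ :=
      (dist_triangle _ θ θ₀).trans_lt (by linarith)
    have h4 : Q ((u j : ↥Θ) : Fin d → ℝ) ω ≤ gU θ₀ δ ω := le_ciSup (hbddU θ₀ δ ω) ⟨j, hjJ⟩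
    have h5 := (abs_lt.1 hj2).1
    linarith
  have hLleQ : ∀ θ₀ (δ : ℝ) ω θ, θ ∈ Θ → dist θ θ₀ < δ → gL θ₀ δ ω ≤ Q θ ω := by
    intro θ₀ δ ω θ hθ hdist
    have key : ∀ ε : ℝ, 0 < ε → gL θ₀ δ ω ≤ Q θ ω + ε := by
      intro ε hε
      obtain ⟨j, hj1, hj2⟩ := hnear θ hθ ω ε hε (δ - dist θ θ₀) (by linarith)
      have hjJ : dist ((u j : ↥Θ) : Fin d → ℝ) θ₀ < δ :=
        (dist_triangle _ θ θ₀).trans_lt (by linarith)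
      have h4 : gL θ₀ δ ω ≤ Q ((u j : ↥Θ) : Fin d → ℝ) ω := ciInf_le (hbddL θ₀ δ ω) ⟨j, hjJ⟩
      have h5 := (abs_lt.1 hj2).2
      linarith
    exact le_of_forall_pos_le_add key
  have hsmall : ∀ ρ : ℝ, 0 < ρ → ∃ K : ℕ, ∀ k : ℕ, K ≤ k → 1/((k:ℝ)+1) < ρ := by
    intro ρ hρ
    obtain ⟨K, hK⟩ := exists_nat_gt (1/ρ)
    refine ⟨K, fun k hk => ?_⟩
    rw [div_lt_iff₀ (by positivity)]
    have h1 : (1:ℝ)/ρ < (k:ℝ)+1 := by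
      have h2 : (K:ℝ) ≤ k := by exact_mod_cast hk
      linarith
    rw [div_lt_iff₀ hρ] at h1
    linarith
  have hptwU : ∀ θ₀, θ₀ ∈ Θ → ∀ ω, Tendsto (fun k : ℕ => gU θ₀ (1/((k:ℝ)+1)) ω) atTop
      (𝓝 (Q θ₀ ω)) := by
    intro θ₀ hθ₀ ω
    rw [Metric.tendsto_atTop]
    intro ε hε
    have hc := hQcont ω θ₀ hθ₀
    rw [Metric.continuousWithinAt_iff] at hc
    obtain ⟨ρ, hρ, hball⟩ := hc (ε/2) (by positivity)
    obtain ⟨K, hK⟩ := hsmall ρ hρ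
    refine ⟨K, fun k hk => ?_⟩
    have hδk : (0:ℝ) < 1/((k:ℝ)+1) := by positivity
    haveI := hJne θ₀ hθ₀ _ hδk
    have hup : gU θ₀ (1/((k:ℝ)+1)) ω ≤ Q θ₀ ω + ε/2 := by
      refine ciSup_le fun j => ?_
      have hdj : dist ((u (j:ℕ) : ↥Θ) : Fin d → ℝ) θ₀ < ρ := lt_trans j.2 (hK k hk)
      have hb2 := hball (u (j:ℕ)).2 hdj
      rw [Real.dist_eq] at hb2
      have := (abs_lt.1 hb2).2
      linarith
    have hdown : Q θ₀ ω - ε/2 ≤ gU θ₀ (1/((k:ℝ)+1)) ω := by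
      obtain ⟨j0⟩ := hJne θ₀ hθ₀ _ hδk
      have hdj : dist ((u (j0:ℕ) : ↥Θ) : Fin d → ℝ) θ₀ < ρ := lt_trans j0.2 (hK k hk)
      have hb2 := hball (u (j0:ℕ)).2 hdj
      rw [Real.dist_eq] at hb2
      have h3 := (abs_lt.1 hb2).1
      have h4 : Q ((u (j0:ℕ) : ↥Θ) : Fin d → ℝ) ω ≤ gU θ₀ (1/((k:ℝ)+1)) ω :=
        le_ciSup (hbddU θ₀ _ ω) j0
      linarith
    rw [Real.dist_eq, abs_lt]
    constructor <;> [linarith; linarith]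
  have hptwL : ∀ θ₀, θ₀ ∈ Θ → ∀ ω, Tendsto (fun k : ℕ => gL θ₀ (1/((k:ℝ)+1)) ω) atTop
      (𝓝 (Q θ₀ ω)) := by
    intro θ₀ hθ₀ ω
    rw [Metric.tendsto_atTop]
    intro ε hε
    have hc := hQcont ω θ₀ hθ₀
    rw [Metric.continuousWithinAt_iff] at hc
    obtain ⟨ρ, hρ, hball⟩ := hc (ε/2) (by positivity)
    obtain ⟨K, hK⟩ := hsmall ρ hρ
    refine ⟨K, fun k hk => ?_⟩
    have hδk : (0:ℝ) < 1/((k:ℝ)+1) := by positivity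
    haveI := hJne θ₀ hθ₀ _ hδk
    have hup : Q θ₀ ω - ε/2 ≤ gL θ₀ (1/((k:ℝ)+1)) ω := by
      refine le_ciInf fun j => ?_
      have hdj : dist ((u (j:ℕ) : ↥Θ) : Fin d → ℝ) θ₀ < ρ := lt_trans j.2 (hK k hk)
      have hb2 := hball (u (j:ℕ)).2 hdj
      rw [Real.dist_eq] at hb2
      have := (abs_lt.1 hb2).1
      linarith
    have hdown : gL θ₀ (1/((k:ℝ)+1)) ω ≤ Q θ₀ ω + ε/2 := by
      obtain ⟨j0⟩ := hJne θ₀ hθ₀ _ hδk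
      have hdj : dist ((u (j0:ℕ) : ↥Θ) : Fin d → ℝ) θ₀ < ρ := lt_trans j0.2 (hK k hk)
      have hb2 := hball (u (j0:ℕ)).2 hdj
      rw [Real.dist_eq] at hb2
      have h3 := (abs_lt.1 hb2).2
      have h4 : gL θ₀ (1/((k:ℝ)+1)) ω ≤ Q ((u (j0:ℕ) : ↥Θ) : Fin d → ℝ) ω :=
        ciInf_le (hbddL θ₀ _ ω) j0
      linarith
    rw [Real.dist_eq, abs_lt]
    constructor <;> [linarith; linarith]
  have hIU : ∀ θ₀, θ₀ ∈ Θ → Tendsto (fun k : ℕ => ∫ ω, gU θ₀ (1/((k:ℝ)+1)) ω ∂P) atTop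
      (𝓝 (∫ ω, Q θ₀ ω ∂P)) := by
    intro θ₀ hθ₀
    refine tendsto_integral_of_dominated_convergence F
      (fun k => (hgUm _ _).aestronglyMeasurable) hC1 ?_ ?_
    · intro k
      exact Eventually.of_forall fun ω => by
        rw [Real.norm_eq_abs]; exact hgUb θ₀ hθ₀ _ (by positivity) ω
    · exact Eventually.of_forall fun ω => hptwU θ₀ hθ₀ ω
  have hIL : ∀ θ₀, θ₀ ∈ Θ → Tendsto (fun k : ℕ => ∫ ω, gL θ₀ (1/((k:ℝ)+1)) ω ∂P) atTop
      (𝓝 (∫ ω, Q θ₀ ω ∂P)) := by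
    intro θ₀ hθ₀
    refine tendsto_integral_of_dominated_convergence F
      (fun k => (hgLm _ _).aestronglyMeasurable) hC1 ?_ ?_
    · intro k
      exact Eventually.of_forall fun ω => by
        rw [Real.norm_eq_abs]; exact hgLb θ₀ hθ₀ _ (by positivity) ω
    · exact Eventually.of_forall fun ω => hptwL θ₀ hθ₀ ω
  have claim : ∀ ε : ℝ, 0 < ε → ∀ᵐ ω ∂P, ∀ᶠ n : ℕ in atTop,
      (⨆ θ : Θ, |(n : ℝ)⁻¹ * ∑ t ∈ Finset.range n, Q (θ : Fin d → ℝ) (T^[t] ω)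
        - ∫ x, Q (θ : Fin d → ℝ) x ∂P|) ≤ 3 * ε := by
    intro ε hε
    have hch : ∀ θ₀ : Fin d → ℝ, ∃ δ : ℝ, 0 < δ ∧ (θ₀ ∈ Θ →
        ((∫ ω, gU θ₀ δ ω ∂P) ≤ (∫ ω, Q θ₀ ω ∂P) + ε ∧
          (∫ ω, Q θ₀ ω ∂P) - ε ≤ ∫ ω, gL θ₀ δ ω ∂P)) := by
      intro θ₀
      by_cases hθ₀ : θ₀ ∈ Θ
      · have h1 := (hIU θ₀ hθ₀).eventually_lt_const (lt_add_of_pos_right _ hε)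
        have h2 := (hIL θ₀ hθ₀).eventually_const_lt
          (show (∫ ω, Q θ₀ ω ∂P) - ε < ∫ ω, Q θ₀ ω ∂P by linarith)
        obtain ⟨k, hk1, hk2⟩ := (h1.and h2).exists
        exact ⟨1/((k:ℝ)+1), by positivity, fun _ => ⟨hk1.le, hk2.le⟩⟩
      · exact ⟨1, one_pos, fun h => absurd h hθ₀⟩
    choose δf hδfpos hδfspec using hch
    have hcover : Θ ⊆ ⋃ θ₀ ∈ Θ, Metric.ball θ₀ (δf θ₀) := fun θ hθ =>
      Set.mem_biUnion hθ (Metric.mem_ball_self (hδfpos θ))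
    obtain ⟨t, htΘ, htfin, htcover⟩ := hΘcompact.elim_finite_subcover_image
      (fun θ₀ _ => Metric.isOpen_ball) hcover
    have hbU : ∀ᵐ ω ∂P, ∀ θ₀ ∈ t, Tendsto
        (fun n : ℕ => (n:ℝ)⁻¹ * birkhoffSum T (gU θ₀ (δf θ₀)) n ω) atTop
        (𝓝 (∫ x, gU θ₀ (δf θ₀) x ∂P)) := by
      rw [ae_ball_iff htfin.countable]
      intro θ₀ hθ₀
      exact birkhoff_ae hT (hgUm _ _) (hgUi θ₀ (htΘ hθ₀) _ (hδfpos θ₀))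
    have hbL : ∀ᵐ ω ∂P, ∀ θ₀ ∈ t, Tendsto
        (fun n : ℕ => (n:ℝ)⁻¹ * birkhoffSum T (gL θ₀ (δf θ₀)) n ω) atTop
        (𝓝 (∫ x, gL θ₀ (δf θ₀) x ∂P)) := by
      rw [ae_ball_iff htfin.countable]
      intro θ₀ hθ₀
      exact birkhoff_ae hT (hgLm _ _) (hgLi θ₀ (htΘ hθ₀) _ (hδfpos θ₀))
    filter_upwards [hbU, hbL] with ω hωU hωL
    have hev : ∀ᶠ n : ℕ in atTop, ∀ θ₀ ∈ t,
        ((n:ℝ)⁻¹ * birkhoffSum T (gU θ₀ (δf θ₀)) n ω ≤ (∫ x, gU θ₀ (δf θ₀) x ∂P) + ε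
        ∧ (∫ x, gL θ₀ (δf θ₀) x ∂P) - ε ≤ (n:ℝ)⁻¹ * birkhoffSum T (gL θ₀ (δf θ₀)) n ω) := by
      rw [eventually_all_finite htfin]
      intro θ₀ hθ₀
      have e1 := (hωU θ₀ hθ₀).eventually_lt_const (lt_add_of_pos_right _ hε)
      have e2 := (hωL θ₀ hθ₀).eventually_const_lt
        (show (∫ x, gL θ₀ (δf θ₀) x ∂P) - ε < ∫ x, gL θ₀ (δf θ₀) x ∂P by linarith)
      filter_upwards [e1, e2] with n hn1 hn2
      exact ⟨hn1.le, hn2.le⟩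
    filter_upwards [hev] with n hn
    refine ciSup_le fun θ => ?_
    obtain ⟨θ₀, hθ₀t, hθball⟩ := Set.mem_iUnion₂.1 (htcover θ.2)
    have hθ₀Θ : θ₀ ∈ Θ := htΘ hθ₀t
    have hθΘ : (θ : Fin d → ℝ) ∈ Θ := θ.2
    have hdist : dist (θ : Fin d → ℝ) θ₀ < δf θ₀ := Metric.mem_ball.1 hθball
    obtain ⟨hnU, hnL⟩ := hn θ₀ hθ₀t
    obtain ⟨hIU', hIL'⟩ := hδfspec θ₀ hθ₀Θ
    have hsumU : (n:ℝ)⁻¹ * ∑ t' ∈ Finset.range n, Q (θ : Fin d → ℝ) (T^[t'] ω)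
        ≤ (n:ℝ)⁻¹ * birkhoffSum T (gU θ₀ (δf θ₀)) n ω := by
      refine mul_le_mul_of_nonneg_left ?_ (by positivity)
      refine Finset.sum_le_sum fun t' _ => ?_
      exact hQleU θ₀ (δf θ₀) _ _ hθΘ hdist
    have hsumL : (n:ℝ)⁻¹ * birkhoffSum T (gL θ₀ (δf θ₀)) n ω
        ≤ (n:ℝ)⁻¹ * ∑ t' ∈ Finset.range n, Q (θ : Fin d → ℝ) (T^[t'] ω) := by
      refine mul_le_mul_of_nonneg_left ?_ (by positivity)
      refine Finset.sum_le_sum fun t' _ => ?_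
      exact hLleQ θ₀ (δf θ₀) _ _ hθΘ hdist
    have hIQ1 : (∫ x, gL θ₀ (δf θ₀) x ∂P) ≤ ∫ x, Q (θ : Fin d → ℝ) x ∂P :=
      integral_mono (hgLi θ₀ hθ₀Θ _ (hδfpos θ₀)) (hQi _ hθΘ)
        (fun x => hLleQ θ₀ (δf θ₀) x _ hθΘ hdist)
    have hIQ2 : (∫ x, Q (θ : Fin d → ℝ) x ∂P) ≤ ∫ x, gU θ₀ (δf θ₀) x ∂P :=
      integral_mono (hQi _ hθΘ) (hgUi θ₀ hθ₀Θ _ (hδfpos θ₀))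
        (fun x => hQleU θ₀ (δf θ₀) x _ hθΘ hdist)
    rw [abs_le]
    constructor
    · linarith
    · linarith
  have hae : ∀ᵐ ω ∂P, ∀ m : ℕ, ∀ᶠ n : ℕ in atTop,
      (⨆ θ : Θ, |(n : ℝ)⁻¹ * ∑ t ∈ Finset.range n, Q (θ : Fin d → ℝ) (T^[t] ω)
        - ∫ x, Q (θ : Fin d → ℝ) x ∂P|) ≤ 3 * (1/((m:ℝ)+1)) :=
    ae_all_iff.2 fun m => claim _ (by positivity)
  filter_upwards [hae] with ω hω
  have bdd : ∀ n : ℕ, BddAbove (Set.range fun θ : Θ =>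
      |(n : ℝ)⁻¹ * ∑ t ∈ Finset.range n, Q (θ : Fin d → ℝ) (T^[t] ω)
        - ∫ x, Q (θ : Fin d → ℝ) x ∂P|) := by
    intro n
    refine ⟨(n:ℝ)⁻¹ * ∑ t ∈ Finset.range n, F (T^[t] ω) + ∫ x, F x ∂P, ?_⟩
    rintro x ⟨θ, rfl⟩
    have h1 : |(n : ℝ)⁻¹ * ∑ t ∈ Finset.range n, Q (θ : Fin d → ℝ) (T^[t] ω)|
        ≤ (n:ℝ)⁻¹ * ∑ t ∈ Finset.range n, F (T^[t] ω) := by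
      rw [abs_mul, abs_inv, Nat.abs_cast]
      refine mul_le_mul_of_nonneg_left ?_ (by positivity)
      exact (Finset.abs_sum_le_sum_abs _ _).trans
        (Finset.sum_le_sum fun t _ => hFb _ _ θ.2)
    have h2 : |∫ x, Q (θ : Fin d → ℝ) x ∂P| ≤ ∫ x, F x ∂P := by
      have h3 : |∫ x, Q (θ : Fin d → ℝ) x ∂P| ≤ ∫ x, |Q (θ : Fin d → ℝ) x| ∂P := by
        have := norm_integral_le_integral_norm (μ := P) (f := Q (θ : Fin d → ℝ))
        simpa [Real.norm_eq_abs] using this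
      refine h3.trans (integral_mono (hQi _ θ.2).abs hC1 fun x => hFb x _ θ.2)
    calc |(n : ℝ)⁻¹ * ∑ t ∈ Finset.range n, Q (θ : Fin d → ℝ) (T^[t] ω)
        - ∫ x, Q (θ : Fin d → ℝ) x ∂P|
        ≤ |(n : ℝ)⁻¹ * ∑ t ∈ Finset.range n, Q (θ : Fin d → ℝ) (T^[t] ω)|
          + |∫ x, Q (θ : Fin d → ℝ) x ∂P| := abs_sub _ _
      _ ≤ (n:ℝ)⁻¹ * ∑ t ∈ Finset.range n, F (T^[t] ω) + ∫ x, F x ∂P := add_le_add h1 h2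
  have hnonneg : ∀ n : ℕ, 0 ≤ ⨆ θ : Θ,
      |(n : ℝ)⁻¹ * ∑ t ∈ Finset.range n, Q (θ : Fin d → ℝ) (T^[t] ω)
        - ∫ x, Q (θ : Fin d → ℝ) x ∂P| := by
    intro n
    obtain ⟨θ⟩ := hNE
    exact (abs_nonneg _).trans (le_ciSup (bdd n) θ)
  rw [Metric.tendsto_atTop]
  intro ε hε
  obtain ⟨m, hm⟩ := exists_nat_gt (3/ε)
  have hlt : 3 * (1/((m:ℝ)+1)) < ε := by
    rw [mul_one_div, div_lt_iff₀ (by positivity)]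
    rw [div_lt_iff₀ hε] at hm
    nlinarith
  obtain ⟨N, hN⟩ := eventually_atTop.1 (hω m)
  refine ⟨N, fun n hn => ?_⟩
  rw [Real.dist_eq, sub_zero, abs_of_nonneg (hnonneg n)]
  exact lt_of_le_of_lt (hN n hn) hlt
end

section
/- For every 𝓕₀-measurable random variable μ : Ω → (0,∞) such that Y·log μ, μ, Y·log μ₀ and μ₀ are all integrable, E[Y log μ − μ] ≤ E[Y log μ₀ − μ₀], with equality if and only if μ = μ₀ P-almost everywhere. (Unique maximization of the Poisson-type quasi-likelihood at the true conditional mean; core of the verification of Assumption C2 for Q₂ in Proposition 3.) -/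
open MeasureTheory

private lemma key_le {a b : ℝ} (ha : 0 < a) (hb : 0 < b) :
    a * Real.log b - b ≤ a * Real.log a - a := by
  have hx : 0 < b / a := div_pos hb ha
  have h := Real.log_le_sub_one_of_pos hx
  have h2 : a * Real.log (b / a) ≤ a * (b / a - 1) :=
    mul_le_mul_of_nonneg_left h ha.le
  rw [Real.log_div hb.ne' ha.ne', mul_sub, mul_sub, mul_div_cancel₀ b ha.ne'] at h2
  linarith

private lemma key_eq {a b : ℝ} (ha : 0 < a) (hb : 0 < b)
    (h : a * Real.log a - a - (a * Real.log b - b) = 0) : b = a := by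
  by_contra hne
  have hx : 0 < b / a := div_pos hb ha
  have hx1 : b / a ≠ 1 := fun h1 => hne ((div_eq_one_iff_eq ha.ne').mp h1)
  have hlt := Real.log_lt_sub_one_of_pos hx hx1
  have h2 : a * Real.log (b / a) < a * (b / a - 1) :=
    (mul_lt_mul_iff_right₀ ha).mpr hlt
  rw [Real.log_div hb.ne' ha.ne', mul_sub, mul_sub, mul_div_cancel₀ b ha.ne'] at h2
  linarith

/-- Unique maximization of the Poisson-type quasi-likelihood at the true conditional mean
(core of the verification of Assumption C2 for `Q₂` in Proposition 3): for every
`𝓕₀`-measurable `μ : Ω → (0,∞)` with the stated integrability,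
`E[Y log μ − μ] ≤ E[Y log μ₀ − μ₀]`, with equality iff `μ = μ₀` P-a.e. -/
theorem poisson_quasiLik_unique_max
    {Ω : Type*} {mF : MeasurableSpace Ω} (P : Measure Ω) [IsProbabilityMeasure P]
    (F0 : MeasurableSpace Ω) (hF0 : F0 ≤ mF)
    (Y : Ω → ℝ) (hYnonneg : ∀ ω, 0 ≤ Y ω) (hYint : Integrable Y P)
    (μ0 : Ω → ℝ) (hμ0meas : Measurable[F0] μ0) (hμ0 : μ0 =ᵐ[P] P[Y|F0])
    (hμ0pos : ∀ᵐ ω ∂P, 0 < μ0 ω)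
    (hμ0int1 : Integrable (fun ω => Y ω * Real.log (μ0 ω)) P)
    (hμ0int2 : Integrable μ0 P)
    (μ : Ω → ℝ) (hμmeas : Measurable[F0] μ) (hμpos : ∀ ω, 0 < μ ω)
    (hμint1 : Integrable (fun ω => Y ω * Real.log (μ ω)) P)
    (hμint2 : Integrable μ P) :
    (∫ ω, (Y ω * Real.log (μ ω) - μ ω) ∂P ≤ ∫ ω, (Y ω * Real.log (μ0 ω) - μ0 ω) ∂P) ∧
    ((∫ ω, (Y ω * Real.log (μ ω) - μ ω) ∂P = ∫ ω, (Y ω * Real.log (μ0 ω) - μ0 ω) ∂P) ↔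
      μ =ᵐ[P] μ0) := by
  haveI : SigmaFinite (P.trim hF0) := by
    exact IsFiniteMeasure.toSigmaFinite _
  -- strong measurability of the logs w.r.t. F0
  have hlogμ : StronglyMeasurable[F0] (fun ω => Real.log (μ ω)) :=
    (Real.measurable_log.comp hμmeas).stronglyMeasurable
  have hlogμ0 : StronglyMeasurable[F0] (fun ω => Real.log (μ0 ω)) :=
    (Real.measurable_log.comp hμ0meas).stronglyMeasurable
  -- pull-out step for μ
  have hprodμ : Integrable ((fun ω => Real.log (μ ω)) * Y) P := by
    exact hμint1.congr (ae_of_all _ fun ω => mul_comm _ _)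
  have hcondμ := condExp_mul_of_stronglyMeasurable_left (μ := P) hlogμ hprodμ hYint
  have hintμ : ∫ ω, Y ω * Real.log (μ ω) ∂P = ∫ ω, Real.log (μ ω) * μ0 ω ∂P := by
    rw [show ∫ ω, Y ω * Real.log (μ ω) ∂P
        = ∫ ω, ((fun ω => Real.log (μ ω)) * Y) ω ∂P from by
      simp [Pi.mul_apply, mul_comm]]
    rw [← integral_condExp hF0]
    refine integral_congr_ae (hcondμ.trans ?_)
    filter_upwards [hμ0] with ω h0
    simp [Pi.mul_apply, h0]
  have hintμ_int : Integrable (fun ω => Real.log (μ ω) * μ0 ω) P := by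
    refine (integrable_condExp (m := F0) (f := (fun ω => Real.log (μ ω)) * Y)).congr ?_
    refine hcondμ.trans ?_
    filter_upwards [hμ0] with ω h0
    simp [Pi.mul_apply, h0]
  -- pull-out step for μ0
  have hprodμ0 : Integrable ((fun ω => Real.log (μ0 ω)) * Y) P := by
    exact hμ0int1.congr (ae_of_all _ fun ω => mul_comm _ _)
  have hcondμ0 := condExp_mul_of_stronglyMeasurable_left (μ := P) hlogμ0 hprodμ0 hYint
  have hintμ0 : ∫ ω, Y ω * Real.log (μ0 ω) ∂P = ∫ ω, Real.log (μ0 ω) * μ0 ω ∂P := by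
    rw [show ∫ ω, Y ω * Real.log (μ0 ω) ∂P
        = ∫ ω, ((fun ω => Real.log (μ0 ω)) * Y) ω ∂P from by
      simp [Pi.mul_apply, mul_comm]]
    rw [← integral_condExp hF0]
    refine integral_congr_ae (hcondμ0.trans ?_)
    filter_upwards [hμ0] with ω h0
    simp [Pi.mul_apply, h0]
  have hintμ0_int : Integrable (fun ω => Real.log (μ0 ω) * μ0 ω) P := by
    refine (integrable_condExp (m := F0) (f := (fun ω => Real.log (μ0 ω)) * Y)).congr ?_
    refine hcondμ0.trans ?_
    filter_upwards [hμ0] with ω h0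
    simp [Pi.mul_apply, h0]
  -- the gap function
  set g : Ω → ℝ := fun ω =>
    (Real.log (μ0 ω) * μ0 ω - μ0 ω) - (Real.log (μ ω) * μ0 ω - μ ω) with hg_def
  have hA : Integrable (fun ω => Real.log (μ0 ω) * μ0 ω - μ0 ω) P := hintμ0_int.sub hμ0int2
  have hB : Integrable (fun ω => Real.log (μ ω) * μ0 ω - μ ω) P := hintμ_int.sub hμint2
  have hg_int : Integrable g P := hA.sub hB
  have hg_nonneg : ∀ᵐ ω ∂P, 0 ≤ g ω := by
    filter_upwards [hμ0pos] with ω h0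
    have := key_le h0 (hμpos ω)
    simp only [hg_def]
    nlinarith [this]
  -- integral identities
  have hL : ∫ ω, (Y ω * Real.log (μ ω) - μ ω) ∂P
      = ∫ ω, Real.log (μ ω) * μ0 ω ∂P - ∫ ω, μ ω ∂P := by
    rw [integral_sub hμint1 hμint2, hintμ]
  have hR : ∫ ω, (Y ω * Real.log (μ0 ω) - μ0 ω) ∂P
      = ∫ ω, Real.log (μ0 ω) * μ0 ω ∂P - ∫ ω, μ0 ω ∂P := by
    rw [integral_sub hμ0int1 hμ0int2, hintμ0]
  have hg_integral : ∫ ω, g ω ∂P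
      = (∫ ω, (Y ω * Real.log (μ0 ω) - μ0 ω) ∂P)
        - (∫ ω, (Y ω * Real.log (μ ω) - μ ω) ∂P) := by
    rw [hL, hR]
    simp only [hg_def]
    rw [integral_sub hA hB, integral_sub hintμ0_int hμ0int2, integral_sub hintμ_int hμint2]
  have hg_nn_int : 0 ≤ ∫ ω, g ω ∂P := integral_nonneg_of_ae hg_nonneg
  constructor
  · linarith [hg_integral ▸ hg_nn_int]
  constructor
  · intro heq
    have hzero : ∫ ω, g ω ∂P = 0 := by rw [hg_integral, heq]; ring
    have hg0 : g =ᵐ[P] 0 :=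
      (integral_eq_zero_iff_of_nonneg_ae hg_nonneg hg_int).mp hzero
    filter_upwards [hg0, hμ0pos] with ω hgz h0
    have : μ0 ω * Real.log (μ0 ω) - μ0 ω - (μ0 ω * Real.log (μ ω) - μ ω) = 0 := by
      have := hgz
      simp only [hg_def, Pi.zero_apply] at this
      nlinarith [this]
    exact key_eq h0 (hμpos ω) this
  · intro heq
    refine integral_congr_ae ?_
    filter_upwards [heq] with ω h
    rw [h]
end

section
/- Assume Θ is compact (Assumption B1) and the moment conditions E[Y_{2,t}²] < ∞, E[Y_{2,t} Y_{2,t−i}] < ∞ for i = 1,…,p, E[|T₁(Y_{1,t})|] < ∞, E[Y_{2,t} |T₁(Y_{1,t−l})|] < ∞ for l = 1,…,k, and E[sup_{θ⁽²⁾∈Θ₂} exp(ν_{2,t}(θ⁽²⁾))] < ∞ hold. Then E[ sup_{θ∈Θ} | Q_{1,t}(θ⁽¹⁾) + Q_{2,t}(θ⁽²⁾) | ] < ∞, i.e. Assumption C1 holds for the beta/double-Poisson quasi-likelihoods. [Proposition 3, C1 part, with the required moment conditions made explicit] -/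
open MeasureTheory Filter

noncomputable section

namespace MixTSQL

variable {Ω : Type*}

/-- `T₁(y) = log(y/(1−y))`. -/
def T1 (y : ℝ) : ℝ := Real.log (y / (1 - y))

/-- `T₂(y) = log(1+y)`. -/
def T2 (y : ℝ) : ℝ := Real.log (1 + y)

/-- Regressor vector `(1, T₁(Y_{1,τ−1}),…,T₁(Y_{1,τ−r}), T₂(Y_{2,τ−1}),…,T₂(Y_{2,τ−s}))`
entering the linear predictor `ν_{1,τ}`. -/
def X1 (Y1 Y2 : ℤ → Ω → ℝ) (r s : ℕ) (τ : ℤ) (ω : Ω) : Fin (r + s + 1) → ℝ :=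
  Fin.cons 1 (Fin.append (fun i : Fin r => T1 (Y1 (τ - 1 - (i.val : ℤ)) ω))
    (fun l : Fin s => T2 (Y2 (τ - 1 - (l.val : ℤ)) ω)))

/-- Regressor vector `(1, T₂(Y_{2,τ−1}),…,T₂(Y_{2,τ−p}), T₁(Y_{1,τ−1}),…,T₁(Y_{1,τ−k}))`
entering the linear predictor `ν_{2,τ}`. -/
def X2 (Y1 Y2 : ℤ → Ω → ℝ) (p k : ℕ) (τ : ℤ) (ω : Ω) : Fin (p + k + 1) → ℝ :=
  Fin.cons 1 (Fin.append (fun i : Fin p => T2 (Y2 (τ - 1 - (i.val : ℤ)) ω))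
    (fun l : Fin k => T1 (Y1 (τ - 1 - (l.val : ℤ)) ω)))

/-- Linear predictor `ν_{1,τ}(θ⁽¹⁾) = β₀⁽¹⁾ + Σ β_i⁽¹⁾ T₁(Y_{1,τ−i}) + Σ γ_l⁽¹⁾ T₂(Y_{2,τ−l})`. -/
def nu1 (Y1 Y2 : ℤ → Ω → ℝ) (r s : ℕ) (θ1 : Fin (r + s + 1) → ℝ) (τ : ℤ) (ω : Ω) : ℝ :=
  ∑ j, θ1 j * X1 Y1 Y2 r s τ ω j

/-- Linear predictor `ν_{2,τ}(θ⁽²⁾) = β₀⁽²⁾ + Σ β_i⁽²⁾ T₂(Y_{2,τ−i}) + Σ γ_l⁽²⁾ T₁(Y_{1,τ−l})`. -/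
def nu2 (Y1 Y2 : ℤ → Ω → ℝ) (p k : ℕ) (θ2 : Fin (p + k + 1) → ℝ) (τ : ℤ) (ω : Ω) : ℝ :=
  ∑ j, θ2 j * X2 Y1 Y2 p k τ ω j

/-- Conditional mean `μ_{1,τ}(θ⁽¹⁾) = e^{ν_{1,τ}}/(1+e^{ν_{1,τ}})` (logit link). -/
def mu1 (Y1 Y2 : ℤ → Ω → ℝ) (r s : ℕ) (θ1 : Fin (r + s + 1) → ℝ) (τ : ℤ) (ω : Ω) : ℝ :=
  Real.exp (nu1 Y1 Y2 r s θ1 τ ω) / (1 + Real.exp (nu1 Y1 Y2 r s θ1 τ ω))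

/-- Conditional mean `μ_{2,τ}(θ⁽²⁾) = e^{ν_{2,τ}}` (log link). -/
def mu2 (Y1 Y2 : ℤ → Ω → ℝ) (p k : ℕ) (θ2 : Fin (p + k + 1) → ℝ) (τ : ℤ) (ω : Ω) : ℝ :=
  Real.exp (nu2 Y1 Y2 p k θ2 τ ω)

/-- Beta-type quasi-log-likelihood summand
`Q_{1,τ}(θ⁽¹⁾) = φ₁⁻¹ [Y_{1,τ} log μ_{1,τ} + (1−Y_{1,τ}) log(1−μ_{1,τ})]`. -/
def Q1 (Y1 Y2 : ℤ → Ω → ℝ) (r s : ℕ) (φ1 : ℝ) (θ1 : Fin (r + s + 1) → ℝ) (τ : ℤ) (ω : Ω) : ℝ :=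
  φ1⁻¹ * (Y1 τ ω * Real.log (mu1 Y1 Y2 r s θ1 τ ω)
    + (1 - Y1 τ ω) * Real.log (1 - mu1 Y1 Y2 r s θ1 τ ω))

/-- Double-Poisson-type quasi-log-likelihood summand
`Q_{2,τ}(θ⁽²⁾) = φ₂⁻¹ [Y_{2,τ} log μ_{2,τ} − μ_{2,τ}]`. -/
def Q2 (Y1 Y2 : ℤ → Ω → ℝ) (p k : ℕ) (φ2 : ℝ) (θ2 : Fin (p + k + 1) → ℝ) (τ : ℤ) (ω : Ω) : ℝ :=
  φ2⁻¹ * (Y2 τ ω * Real.log (mu2 Y1 Y2 p k θ2 τ ω) - mu2 Y1 Y2 p k θ2 τ ω)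

/-! ### Auxiliary lemmas -/

lemma measurable_T1 : Measurable T1 :=
  (measurable_id.div (measurable_const.sub measurable_id)).log

lemma measurable_T2 : Measurable T2 :=
  (measurable_const.add measurable_id).log

lemma T2_nonneg {y : ℝ} (hy : 0 ≤ y) : 0 ≤ T2 y :=
  Real.log_nonneg (by linarith)

lemma T2_le {y : ℝ} (hy : 0 ≤ y) : T2 y ≤ y := by
  have := Real.log_le_sub_one_of_pos (x := 1 + y) (by linarith)
  simpa [T2] using this

lemma sum_abs_X1 (Y1 Y2 : ℤ → Ω → ℝ) (r s : ℕ) (τ : ℤ) (ω : Ω) :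
    ∑ j, |X1 Y1 Y2 r s τ ω j|
      = 1 + ((∑ i : Fin r, |T1 (Y1 (τ - 1 - (i.val : ℤ)) ω)|)
        + ∑ l : Fin s, |T2 (Y2 (τ - 1 - (l.val : ℤ)) ω)|) := by
  rw [Fin.sum_univ_succ]
  simp [X1, Fin.sum_univ_add, Fin.append_left, Fin.append_right]

lemma sum_abs_X2 (Y1 Y2 : ℤ → Ω → ℝ) (p k : ℕ) (τ : ℤ) (ω : Ω) :
    ∑ j, |X2 Y1 Y2 p k τ ω j|
      = 1 + ((∑ i : Fin p, |T2 (Y2 (τ - 1 - (i.val : ℤ)) ω)|)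
        + ∑ l : Fin k, |T1 (Y1 (τ - 1 - (l.val : ℤ)) ω)|) := by
  rw [Fin.sum_univ_succ]
  simp [X2, Fin.sum_univ_add, Fin.append_left, Fin.append_right]

lemma abs_sum_mul_le {n : ℕ} (θ x : Fin n → ℝ) {C : ℝ} (hC : ∀ j, |θ j| ≤ C) :
    |∑ j, θ j * x j| ≤ C * ∑ j, |x j| := by
  calc |∑ j, θ j * x j| ≤ ∑ j, |θ j * x j| := Finset.abs_sum_le_sum_abs _ _
    _ ≤ ∑ j, C * |x j| := by
        refine Finset.sum_le_sum fun j _ => ?_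
        rw [abs_mul]
        exact mul_le_mul_of_nonneg_right (hC j) (abs_nonneg _)
    _ = C * ∑ j, |x j| := (Finset.mul_sum _ _ _).symm

/-- Transfer of integrability across time via strict stationarity. -/
lemma integrable_transfer {mΩ : MeasurableSpace Ω} (P : Measure Ω)
    (Y1 Y2 : ℤ → Ω → ℝ) (h1 : ∀ τ, Measurable (Y1 τ)) (h2 : ∀ τ, Measurable (Y2 τ))
    (hstat : ∀ h : ℤ,
      Measure.map (fun ω => fun n : ℤ => (Y1 (n + h) ω, Y2 (n + h) ω)) P
        = Measure.map (fun ω => fun n : ℤ => (Y1 n ω, Y2 n ω)) P)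
    (F : ℝ × ℝ → ℝ) (hF : Measurable F) (t τ : ℤ)
    (hint : Integrable (fun ω => F (Y1 t ω, Y2 t ω)) P) :
    Integrable (fun ω => F (Y1 τ ω, Y2 τ ω)) P := by
  have hmeas : ∀ σ : ℤ, Measurable (fun ω => (Y1 σ ω, Y2 σ ω)) :=
    fun σ => (h1 σ).prodMk (h2 σ)
  have key : Measure.map (fun ω => (Y1 τ ω, Y2 τ ω)) P
      = Measure.map (fun ω => (Y1 t ω, Y2 t ω)) P := by
    have h := congrArg (Measure.map (fun g : ℤ → ℝ × ℝ => g t)) (hstat (τ - t))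
    rw [Measure.map_map (measurable_pi_apply t)
        (measurable_pi_lambda _ fun n => hmeas (n + (τ - t))),
      Measure.map_map (measurable_pi_apply t)
        (measurable_pi_lambda _ fun n => hmeas n)] at h
    have ht : t + (τ - t) = τ := by ring
    simpa [Function.comp_def, ht] using h
  have hInt_t : Integrable F (Measure.map (fun ω => (Y1 t ω, Y2 t ω)) P) := by
    rw [integrable_map_measure hF.aestronglyMeasurable (hmeas t).aemeasurable]
    exact hint
  rw [← key] at hInt_t
  exact (integrable_map_measure hF.aestronglyMeasurable (hmeas τ).aemeasurable).mp hInt_t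

/-- A continuous bounded function has the same supremum over a dense subset. -/
lemma ciSup_dense_eq {α : Type*} [TopologicalSpace α] [Nonempty α] {D : Set α}
    (hD : Dense D) {f : α → ℝ} (hf : Continuous f) (hbdd : BddAbove (Set.range f)) :
    ⨆ d : D, f d = ⨆ x, f x := by
  have hDne : D.Nonempty := hD.nonempty
  have : Nonempty D := hDne.to_subtype
  have hbddD : BddAbove (Set.range fun d : D => f d.val) :=
    hbdd.mono (Set.range_comp_subset_range _ _)
  refine le_antisymm (ciSup_le fun d => le_ciSup hbdd d.1) (ciSup_le fun x => ?_)
  have hsub : closure D ⊆ f ⁻¹' Set.Iic (⨆ d : D, f d.val) :=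
    closure_minimal (fun d hd => le_ciSup hbddD (⟨d, hd⟩ : D)) (isClosed_Iic.preimage hf)
  exact hsub (hD x)

/-- **Proposition 3 (C1 part).** Under compactness of `Θ = Θ₁ × Θ₂` (Assumption B1) and the
explicit moment conditions, `E[ sup_{θ∈Θ} |Q_{1,t}(θ⁽¹⁾) + Q_{2,t}(θ⁽²⁾)| ] < ∞`, i.e.
Assumption C1 holds for the beta/double-Poisson quasi-likelihoods. -/
theorem assumptionC1_holds
    {mΩ : MeasurableSpace Ω} (P : Measure Ω) [IsProbabilityMeasure P]
    (Y1 Y2 : ℤ → Ω → ℝ)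
    (hY1meas : ∀ τ, Measurable (Y1 τ)) (hY2meas : ∀ τ, Measurable (Y2 τ))
    (hY1mem : ∀ τ ω, Y1 τ ω ∈ Set.Ioo (0 : ℝ) 1) (hY2nonneg : ∀ τ ω, 0 ≤ Y2 τ ω)
    -- strict stationarity of the bivariate process
    (hstat : ∀ h : ℤ,
      Measure.map (fun ω => fun n : ℤ => (Y1 (n + h) ω, Y2 (n + h) ω)) P
        = Measure.map (fun ω => fun n : ℤ => (Y1 n ω, Y2 n ω)) P)
    (r s p k : ℕ) (φ1 φ2 : ℝ) (hφ1 : 0 < φ1) (hφ2 : 0 < φ2)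
    (Θ1 : Set (Fin (r + s + 1) → ℝ)) (Θ2 : Set (Fin (p + k + 1) → ℝ))
    -- Assumption B1: compactness of Θ = Θ₁ × Θ₂
    (hΘ1 : IsCompact Θ1) (hΘ2 : IsCompact Θ2)
    (t : ℤ)
    -- moment conditions
    (hm1 : Integrable (fun ω => (Y2 t ω) ^ 2) P)
    (hm2 : ∀ i : Fin p, Integrable (fun ω => Y2 t ω * Y2 (t - 1 - (i.val : ℤ)) ω) P)
    (hm3 : Integrable (fun ω => |T1 (Y1 t ω)|) P)
    (hm4 : ∀ l : Fin k, Integrable (fun ω => Y2 t ω * |T1 (Y1 (t - 1 - (l.val : ℤ)) ω)|) P)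
    (hm5 : Integrable (fun ω => ⨆ θ2 : Θ2, Real.exp (nu2 Y1 Y2 p k θ2.val t ω)) P) :
    Integrable (fun ω =>
      ⨆ θ : (Θ1 ×ˢ Θ2 : Set ((Fin (r + s + 1) → ℝ) × (Fin (p + k + 1) → ℝ))),
        |Q1 Y1 Y2 r s φ1 θ.val.1 t ω + Q2 Y1 Y2 p k φ2 θ.val.2 t ω|) P := by
  classical
  -- Empty parameter set: the supremum is identically 0.
  by_cases hne : (Θ1 ×ˢ Θ2 : Set ((Fin (r + s + 1) → ℝ) × (Fin (p + k + 1) → ℝ))).Nonempty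
  swap
  · have : IsEmpty ↥(Θ1 ×ˢ Θ2 : Set ((Fin (r + s + 1) → ℝ) × (Fin (p + k + 1) → ℝ))) := by
      rw [Set.not_nonempty_iff_eq_empty] at hne
      simp [hne]
    simp [Real.iSup_of_isEmpty]
  have hΘne : Nonempty ↥(Θ1 ×ˢ Θ2 : Set ((Fin (r + s + 1) → ℝ) × (Fin (p + k + 1) → ℝ))) :=
    hne.to_subtype
  obtain ⟨θ₀, hθ₀⟩ := hne
  -- Rewriting of Q1 and Q2 into smooth forms.
  have hQ1 : ∀ (θ1 : Fin (r + s + 1) → ℝ) (ω : Ω), Q1 Y1 Y2 r s φ1 θ1 t ω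
      = φ1⁻¹ * (Y1 t ω * nu1 Y1 Y2 r s θ1 t ω
        - Real.log (1 + Real.exp (nu1 Y1 Y2 r s θ1 t ω))) := by
    intro θ1 ω
    have hx : (0:ℝ) < Real.exp (nu1 Y1 Y2 r s θ1 t ω) := Real.exp_pos _
    have h1 : (0:ℝ) < 1 + Real.exp (nu1 Y1 Y2 r s θ1 t ω) := by linarith
    unfold Q1 mu1
    rw [Real.log_div hx.ne' h1.ne',
      show 1 - Real.exp (nu1 Y1 Y2 r s θ1 t ω) / (1 + Real.exp (nu1 Y1 Y2 r s θ1 t ω))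
        = (1 + Real.exp (nu1 Y1 Y2 r s θ1 t ω))⁻¹ by field_simp; ring,
      Real.log_inv, Real.log_exp]
    ring
  have hQ2 : ∀ (θ2 : Fin (p + k + 1) → ℝ) (ω : Ω), Q2 Y1 Y2 p k φ2 θ2 t ω
      = φ2⁻¹ * (Y2 t ω * nu2 Y1 Y2 p k θ2 t ω - Real.exp (nu2 Y1 Y2 p k θ2 t ω)) := by
    intro θ2 ω; unfold Q2 mu2; rw [Real.log_exp]
  -- Uniform coordinate bounds on the compact parameter sets.
  obtain ⟨B1, hB1⟩ := isBounded_iff_forall_norm_le.mp hΘ1.isBounded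
  obtain ⟨B2, hB2⟩ := isBounded_iff_forall_norm_le.mp hΘ2.isBounded
  set C1 : ℝ := max B1 0 with hC1def
  set C2 : ℝ := max B2 0 with hC2def
  have hC1 : ∀ θ1 ∈ Θ1, ∀ j, |θ1 j| ≤ C1 := fun θ1 h j =>
    calc |θ1 j| = ‖θ1 j‖ := (Real.norm_eq_abs _).symm
      _ ≤ ‖θ1‖ := norm_le_pi_norm θ1 j
      _ ≤ B1 := hB1 θ1 h
      _ ≤ C1 := le_max_left _ _
  have hC2 : ∀ θ2 ∈ Θ2, ∀ j, |θ2 j| ≤ C2 := fun θ2 h j =>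
    calc |θ2 j| = ‖θ2 j‖ := (Real.norm_eq_abs _).symm
      _ ≤ ‖θ2‖ := norm_le_pi_norm θ2 j
      _ ≤ B2 := hB2 θ2 h
      _ ≤ C2 := le_max_left _ _
  have hC1nn : 0 ≤ C1 := le_max_right _ _
  have hC2nn : 0 ≤ C2 := le_max_right _ _
  -- The dominating function.
  set S1 : Ω → ℝ := fun ω => ∑ j, |X1 Y1 Y2 r s t ω j| with hS1def
  set S2 : Ω → ℝ := fun ω => ∑ j, |X2 Y1 Y2 p k t ω j| with hS2def
  set M : Ω → ℝ := fun ω => ⨆ θ2 : Θ2, Real.exp (nu2 Y1 Y2 p k θ2.val t ω) with hMdef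
  set G : Ω → ℝ := fun ω => φ1⁻¹ * (2 * (C1 * S1 ω) + Real.log 2)
    + φ2⁻¹ * (C2 * (Y2 t ω * S2 ω) + M ω) with hGdef
  -- Continuity in the parameter.
  have hcont1 : ∀ ω, Continuous fun θ1 : Fin (r + s + 1) → ℝ => nu1 Y1 Y2 r s θ1 t ω := by
    intro ω; unfold nu1
    exact continuous_finset_sum _ fun j _ => (continuous_apply j).mul continuous_const
  have hcont2 : ∀ ω, Continuous fun θ2 : Fin (p + k + 1) → ℝ => nu2 Y1 Y2 p k θ2 t ω := by
    intro ω; unfold nu2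
    exact continuous_finset_sum _ fun j _ => (continuous_apply j).mul continuous_const
  have hlogcont : Continuous fun x : ℝ => Real.log (1 + Real.exp x) :=
    Continuous.log (continuous_const.add Real.continuous_exp)
      (fun x => by positivity)
  have hcontF : ∀ ω : Ω, Continuous fun θ :
      ↥(Θ1 ×ˢ Θ2 : Set ((Fin (r + s + 1) → ℝ) × (Fin (p + k + 1) → ℝ))) =>
      |Q1 Y1 Y2 r s φ1 θ.val.1 t ω + Q2 Y1 Y2 p k φ2 θ.val.2 t ω| := by
    intro ω
    simp only [hQ1, hQ2]
    have h1 : Continuous fun θ :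
        ↥(Θ1 ×ˢ Θ2 : Set ((Fin (r + s + 1) → ℝ) × (Fin (p + k + 1) → ℝ))) =>
        nu1 Y1 Y2 r s θ.val.1 t ω :=
      (hcont1 ω).comp (continuous_fst.comp continuous_subtype_val)
    have h2 : Continuous fun θ :
        ↥(Θ1 ×ˢ Θ2 : Set ((Fin (r + s + 1) → ℝ) × (Fin (p + k + 1) → ℝ))) =>
        nu2 Y1 Y2 p k θ.val.2 t ω :=
      (hcont2 ω).comp (continuous_snd.comp continuous_subtype_val)
    exact (((continuous_const.mul
        ((continuous_const.mul h1).sub (hlogcont.comp h1))).add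
      (continuous_const.mul
        ((continuous_const.mul h2).sub (Real.continuous_exp.comp h2)))).abs)
  -- Boundedness of the suprema defining `M` and the target.
  have hbddM : ∀ ω, BddAbove (Set.range fun θ2 : Θ2 =>
      Real.exp (nu2 Y1 Y2 p k θ2.val t ω)) := by
    intro ω
    have hc : IsCompact ((fun θ2 => Real.exp (nu2 Y1 Y2 p k θ2 t ω)) '' Θ2) :=
      hΘ2.image (Real.continuous_exp.comp (hcont2 ω))
    have := hc.bddAbove
    rwa [Set.image_eq_range] at this
  have hCS : CompactSpace
      ↥(Θ1 ×ˢ Θ2 : Set ((Fin (r + s + 1) → ℝ) × (Fin (p + k + 1) → ℝ))) :=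
    isCompact_iff_compactSpace.mp (hΘ1.prod hΘ2)
  have hbddF : ∀ ω, BddAbove (Set.range fun θ :
      ↥(Θ1 ×ˢ Θ2 : Set ((Fin (r + s + 1) → ℝ) × (Fin (p + k + 1) → ℝ))) =>
      |Q1 Y1 Y2 r s φ1 θ.val.1 t ω + Q2 Y1 Y2 p k φ2 θ.val.2 t ω|) :=
    fun ω => (isCompact_range (hcontF ω)).bddAbove
  -- Pointwise domination by `G`.
  have hptwise : ∀ ω, ∀ θ :
      ↥(Θ1 ×ˢ Θ2 : Set ((Fin (r + s + 1) → ℝ) × (Fin (p + k + 1) → ℝ))),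
      |Q1 Y1 Y2 r s φ1 θ.val.1 t ω + Q2 Y1 Y2 p k φ2 θ.val.2 t ω| ≤ G ω := by
    intro ω θ
    obtain ⟨⟨θ1, θ2⟩, hθ⟩ := θ
    have hθ1 : θ1 ∈ Θ1 := hθ.1
    have hθ2 : θ2 ∈ Θ2 := hθ.2
    set ν1 : ℝ := nu1 Y1 Y2 r s θ1 t ω with hν1def
    set ν2 : ℝ := nu2 Y1 Y2 p k θ2 t ω with hν2def
    have hν1 : |ν1| ≤ C1 * S1 ω := abs_sum_mul_le θ1 _ (hC1 θ1 hθ1)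
    have hν2 : |ν2| ≤ C2 * S2 ω := abs_sum_mul_le θ2 _ (hC2 θ2 hθ2)
    have ha := hY1mem t ω
    have hb := hY2nonneg t ω
    -- bound on `log(1 + e^{ν1})`
    have hL : Real.log (1 + Real.exp ν1) ≤ Real.log 2 + |ν1| := by
      have e1 : Real.exp ν1 ≤ Real.exp |ν1| := Real.exp_le_exp.mpr (le_abs_self _)
      have e2 : (1:ℝ) ≤ Real.exp |ν1| := Real.one_le_exp (abs_nonneg _)
      calc Real.log (1 + Real.exp ν1) ≤ Real.log (2 * Real.exp |ν1|) :=
            Real.log_le_log (by positivity) (by linarith)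
        _ = Real.log 2 + |ν1| := by
            rw [Real.log_mul two_ne_zero (Real.exp_pos _).ne', Real.log_exp]
    have hL0 : 0 ≤ Real.log (1 + Real.exp ν1) :=
      Real.log_nonneg (by nlinarith [Real.exp_pos ν1])
    -- bound on the first summand
    have hb1 : |Q1 Y1 Y2 r s φ1 θ1 t ω| ≤ φ1⁻¹ * (2 * (C1 * S1 ω) + Real.log 2) := by
      rw [hQ1, abs_mul, abs_of_nonneg (inv_nonneg.mpr hφ1.le)]
      refine mul_le_mul_of_nonneg_left ?_ (inv_nonneg.mpr hφ1.le)
      have t0 : |Y1 t ω * ν1 - Real.log (1 + Real.exp ν1)|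
          ≤ |Y1 t ω * ν1| + |Real.log (1 + Real.exp ν1)| := abs_sub _ _
      have t1 : |Y1 t ω * ν1| ≤ |ν1| := by
        rw [abs_mul, abs_of_pos ha.1]
        nlinarith [abs_nonneg ν1, ha.2]
      have t2 : |Real.log (1 + Real.exp ν1)| = Real.log (1 + Real.exp ν1) :=
        abs_of_nonneg hL0
      nlinarith
    -- bound on the second summand
    have hexpM : Real.exp ν2 ≤ M ω := le_ciSup (hbddM ω) (⟨θ2, hθ2⟩ : Θ2)
    have hb2 : |Q2 Y1 Y2 p k φ2 θ2 t ω| ≤ φ2⁻¹ * (C2 * (Y2 t ω * S2 ω) + M ω) := by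
      rw [hQ2, abs_mul, abs_of_nonneg (inv_nonneg.mpr hφ2.le)]
      refine mul_le_mul_of_nonneg_left ?_ (inv_nonneg.mpr hφ2.le)
      have t0 : |Y2 t ω * ν2 - Real.exp ν2| ≤ |Y2 t ω * ν2| + |Real.exp ν2| := abs_sub _ _
      have t1 : |Y2 t ω * ν2| ≤ Y2 t ω * (C2 * S2 ω) := by
        rw [abs_mul, abs_of_nonneg hb]
        exact mul_le_mul_of_nonneg_left hν2 hb
      have t2 : |Real.exp ν2| = Real.exp ν2 := abs_of_nonneg (Real.exp_pos _).le
      nlinarith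
    calc |Q1 Y1 Y2 r s φ1 θ1 t ω + Q2 Y1 Y2 p k φ2 θ2 t ω|
        ≤ |Q1 Y1 Y2 r s φ1 θ1 t ω| + |Q2 Y1 Y2 p k φ2 θ2 t ω| := abs_add_le _ _
      _ ≤ G ω := by rw [hGdef]; dsimp only; linarith
  -- Integrability of the dominating function.
  have hY2int : ∀ τ' : ℤ, Integrable (fun ω => Y2 τ' ω) P := by
    intro τ'
    refine integrable_transfer P Y1 Y2 hY1meas hY2meas hstat (fun q => q.2)
      measurable_snd t τ' ?_
    refine Integrable.mono' ((integrable_const (1:ℝ)).add hm1)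
      (hY2meas t).aestronglyMeasurable ?_
    filter_upwards with ω
    rw [Real.norm_eq_abs, abs_of_nonneg (hY2nonneg t ω)]
    simp only [Pi.add_apply]
    nlinarith [sq_nonneg (Y2 t ω - 1), hY2nonneg t ω]
  have hT1int : ∀ τ' : ℤ, Integrable (fun ω => |T1 (Y1 τ' ω)|) P := fun τ' =>
    integrable_transfer P Y1 Y2 hY1meas hY2meas hstat (fun q => |T1 q.1|)
      ((measurable_T1.comp measurable_fst).abs) t τ' hm3
  have hT2int : ∀ τ' : ℤ, Integrable (fun ω => |T2 (Y2 τ' ω)|) P := by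
    intro τ'
    refine Integrable.mono' (hY2int τ')
      ((measurable_T2.comp (hY2meas τ')).abs).aestronglyMeasurable ?_
    filter_upwards with ω
    rw [Real.norm_eq_abs, abs_abs, abs_of_nonneg (T2_nonneg (hY2nonneg _ _))]
    exact T2_le (hY2nonneg _ _)
  have hS1int : Integrable S1 P := by
    have : S1 = fun ω => 1 + ((∑ i : Fin r, |T1 (Y1 (t - 1 - (i.val : ℤ)) ω)|)
        + ∑ l : Fin s, |T2 (Y2 (t - 1 - (l.val : ℤ)) ω)|) := by
      funext ω; exact sum_abs_X1 Y1 Y2 r s t ω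
    rw [this]
    exact (integrable_const 1).add ((integrable_finset_sum _ fun i _ => hT1int _).add
      (integrable_finset_sum _ fun l _ => hT2int _))
  have hY2S2int : Integrable (fun ω => Y2 t ω * S2 ω) P := by
    have : (fun ω => Y2 t ω * S2 ω)
        = fun ω => Y2 t ω * 1 + ((∑ i : Fin p, Y2 t ω * |T2 (Y2 (t - 1 - (i.val : ℤ)) ω)|)
          + ∑ l : Fin k, Y2 t ω * |T1 (Y1 (t - 1 - (l.val : ℤ)) ω)|) := by
      funext ω
      rw [hS2def]
      dsimp only
      rw [sum_abs_X2 Y1 Y2 p k t ω, mul_add, mul_add, ← Finset.mul_sum, ← Finset.mul_sum]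
    rw [this]
    refine Integrable.add ?_ (Integrable.add ?_ ?_)
    · simpa using hY2int t
    · refine integrable_finset_sum _ fun i _ => ?_
      refine Integrable.mono' (hm2 i)
        (((hY2meas t).mul ((measurable_T2.comp (hY2meas _)).abs)).aestronglyMeasurable) ?_
      filter_upwards with ω
      rw [Real.norm_eq_abs,
        abs_of_nonneg (mul_nonneg (hY2nonneg t ω) (abs_nonneg _)),
        abs_of_nonneg (T2_nonneg (hY2nonneg _ _))]
      exact mul_le_mul_of_nonneg_left (T2_le (hY2nonneg _ _)) (hY2nonneg t ω)
    · exact integrable_finset_sum _ fun l _ => hm4 l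
  have hGint : Integrable G P := by
    rw [hGdef]
    exact ((((hS1int.const_mul C1).const_mul 2).add
        (integrable_const (Real.log 2))).const_mul φ1⁻¹).add
      (((hY2S2int.const_mul C2).add hm5).const_mul φ2⁻¹)
  -- Measurability of the supremum via a countable dense subset of the parameter set.
  have hmeasnu1 : ∀ θ1, Measurable fun ω => nu1 Y1 Y2 r s θ1 t ω := by
    intro θ1
    unfold nu1
    refine Finset.measurable_sum _ fun j _ => Measurable.const_mul ?_ _
    refine Fin.cases ?_ (fun i => ?_) j
    · simp only [X1, Fin.cons_zero]; exact measurable_const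
    · simp only [X1, Fin.cons_succ]
      refine Fin.addCases (motive := fun i => Measurable fun ω =>
        Fin.append (fun i' : Fin r => T1 (Y1 (t - 1 - (i'.val : ℤ)) ω))
          (fun l' : Fin s => T2 (Y2 (t - 1 - (l'.val : ℤ)) ω)) i) (fun i' => ?_) (fun l' => ?_) i
      · simpa [Fin.append_left, Function.comp_def] using measurable_T1.comp (hY1meas _)
      · simpa [Fin.append_right, Function.comp_def] using measurable_T2.comp (hY2meas _)
  have hmeasnu2 : ∀ θ2, Measurable fun ω => nu2 Y1 Y2 p k θ2 t ω := by
    intro θ2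
    unfold nu2
    refine Finset.measurable_sum _ fun j _ => Measurable.const_mul ?_ _
    refine Fin.cases ?_ (fun i => ?_) j
    · simp only [X2, Fin.cons_zero]; exact measurable_const
    · simp only [X2, Fin.cons_succ]
      refine Fin.addCases (motive := fun i => Measurable fun ω =>
        Fin.append (fun i' : Fin p => T2 (Y2 (t - 1 - (i'.val : ℤ)) ω))
          (fun l' : Fin k => T1 (Y1 (t - 1 - (l'.val : ℤ)) ω)) i) (fun i' => ?_) (fun l' => ?_) i
      · simpa [Fin.append_left, Function.comp_def] using measurable_T2.comp (hY2meas _)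
      · simpa [Fin.append_right, Function.comp_def] using measurable_T1.comp (hY1meas _)
  have hmeasF : ∀ θ :
      ↥(Θ1 ×ˢ Θ2 : Set ((Fin (r + s + 1) → ℝ) × (Fin (p + k + 1) → ℝ))),
      Measurable fun ω => |Q1 Y1 Y2 r s φ1 θ.val.1 t ω + Q2 Y1 Y2 p k φ2 θ.val.2 t ω| := by
    intro θ
    simp only [hQ1, hQ2]
    exact ((((measurable_const.mul
        (((hY1meas t).mul (hmeasnu1 θ.val.1)).sub
          ((measurable_const.add (hmeasnu1 θ.val.1).exp).log)))).add
      (measurable_const.mul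
        (((hY2meas t).mul (hmeasnu2 θ.val.2)).sub (hmeasnu2 θ.val.2).exp))).abs)
  obtain ⟨D, hDcount, hDdense⟩ := TopologicalSpace.exists_countable_dense
    ↥(Θ1 ×ˢ Θ2 : Set ((Fin (r + s + 1) → ℝ) × (Fin (p + k + 1) → ℝ)))
  have hDco : Countable ↥D := hDcount.to_subtype
  have hsup_eq : (fun ω =>
      ⨆ θ : (Θ1 ×ˢ Θ2 : Set ((Fin (r + s + 1) → ℝ) × (Fin (p + k + 1) → ℝ))),
        |Q1 Y1 Y2 r s φ1 θ.val.1 t ω + Q2 Y1 Y2 p k φ2 θ.val.2 t ω|)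
      = fun ω => ⨆ d : D,
        |Q1 Y1 Y2 r s φ1 d.val.val.1 t ω + Q2 Y1 Y2 p k φ2 d.val.val.2 t ω| := by
    funext ω
    exact (ciSup_dense_eq hDdense (hcontF ω) (hbddF ω)).symm
  have hmeas_sup : Measurable (fun ω =>
      ⨆ θ : (Θ1 ×ˢ Θ2 : Set ((Fin (r + s + 1) → ℝ) × (Fin (p + k + 1) → ℝ))),
        |Q1 Y1 Y2 r s φ1 θ.val.1 t ω + Q2 Y1 Y2 p k φ2 θ.val.2 t ω|) := by
    rw [hsup_eq]
    exact Measurable.iSup fun d => hmeasF d.val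
  -- Conclusion.
  refine Integrable.mono' hGint hmeas_sup.aestronglyMeasurable ?_
  filter_upwards with ω
  have hnonneg : 0 ≤ ⨆ θ : (Θ1 ×ˢ Θ2 : Set ((Fin (r + s + 1) → ℝ) × (Fin (p + k + 1) → ℝ))),
      |Q1 Y1 Y2 r s φ1 θ.val.1 t ω + Q2 Y1 Y2 p k φ2 θ.val.2 t ω| :=
    le_trans (abs_nonneg _) (le_ciSup (hbddF ω) (⟨θ₀, hθ₀⟩))
  rw [Real.norm_eq_abs, abs_of_nonneg hnonneg]
  exact ciSup_le fun θ => hptwise ω θ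

end MixTSQL
end
end
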